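/- arXiv:1910.12280 — 4 statements merged into one kernel-verified Lean document; each statement's English description precedes it below -/
import Mathlib

section
/- (Buchberger's criterion over a PID.) Let R be a principal ideal domain, S = R[x_1,…,x_n] with a fixed monomial order, G = {f_1,…,f_m} a family of nonzero elements of S, and U the ideal generated by f_1,…,f_m. Then G is a Gröbner basis of U if and only if for every 1 ≤ i < j ≤ m the element S_R(f_i,f_j) (for some, equivalently any, choice of least common multiples) reduces to zero modulo G. -/
open MvPolynomial
open scoped MonomialOrder

namespace PaperGB

variable {n : ℕ} {R : Type*} [CommSemiring R]

/-- The degree (leading exponent) of a multivariate polynomial w.r.t. a monomial order. -/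
noncomputable def mDeg (m : MonomialOrder (Fin n)) (f : MvPolynomial (Fin n) R) :
    Fin n →₀ ℕ :=
  m.toSyn.symm (f.support.sup fun d => m.toSyn d)

/-- The leading coefficient. -/
noncomputable def mLC (m : MonomialOrder (Fin n)) (f : MvPolynomial (Fin n) R) : R :=
  f.coeff (mDeg m f)

/-- The leading term. -/
noncomputable def mLT (m : MonomialOrder (Fin n)) (f : MvPolynomial (Fin n) R) :
    MvPolynomial (Fin n) R :=
  monomial (mDeg m f) (mLC m f)

variable {R : Type*} [CommRing R]

/-- The leading term ideal. -/
noncomputable def mLTIdeal (m : MonomialOrder (Fin n)) (I : Ideal (MvPolynomial (Fin n) R)) :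
    Ideal (MvPolynomial (Fin n) R) :=
  Ideal.span ((fun g => mLT m g) '' {g | g ∈ I ∧ g ≠ 0})

/-- `f` is a Gröbner basis of `I`. -/
def IsGroebnerBasis (m : MonomialOrder (Fin n)) (I : Ideal (MvPolynomial (Fin n) R))
    {k : ℕ} (f : Fin k → MvPolynomial (Fin n) R) : Prop :=
  (∀ i, f i ≠ 0) ∧ (∀ i, f i ∈ I) ∧
    Ideal.span (Set.range fun i => mLT m (f i)) = mLTIdeal m I

/-- `g` reduces to zero modulo the family `f`. -/
def ReducesToZero (m : MonomialOrder (Fin n)) {k : ℕ} (f : Fin k → MvPolynomial (Fin n) R)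
    (g : MvPolynomial (Fin n) R) : Prop :=
  ∃ p : Fin k → MvPolynomial (Fin n) R,
    g = ∑ i, p i * f i ∧
    ∀ i, p i * f i ≠ 0 → mDeg m (p i) + mDeg m (f i) ≼[m] mDeg m g

/-- A weakly regular sequence. -/
def IsWeakRegularSeq {k : ℕ} (s : Fin k → R) : Prop :=
  ∀ i : Fin k, ∀ x : R,
    s i * x ∈ Ideal.span (s '' {j | j < i}) → x ∈ Ideal.span (s '' {j | j < i})

/-- A permutable weak regular sequence of non-units. -/
def IsPermutableWeakRegularSeq {k : ℕ} (s : Fin k → R) : Prop :=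
  (∀ i, ¬ IsUnit (s i)) ∧ ∀ σ : Equiv.Perm (Fin k), IsWeakRegularSeq (s ∘ σ)

/-- `M` has a free resolution `0 → F_p → ⋯ → F_0 → M → 0` by finitely generated
free `S`-modules. -/
def HasFiniteFreeResolutionOfLength (S : Type*) [CommRing S] (M : Type*) [AddCommGroup M]
    [Module S M] (p : ℕ) : Prop :=
  ∃ (d : ℕ → ℕ) (g : ∀ i : ℕ, (Fin (d (i + 1)) → S) →ₗ[S] (Fin (d i) → S))
    (ε : (Fin (d 0) → S) →ₗ[S] M),
    (∀ i, p < i → d i = 0) ∧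
    Function.Surjective ε ∧
    LinearMap.range (g 0) = LinearMap.ker ε ∧
    ∀ i, LinearMap.range (g (i + 1)) = LinearMap.ker (g i)

/-- `M` has an infinite free resolution `⋯ → F_p → F_p → F_p → F_{p-1} → ⋯ → F_0 → M → 0`
by finitely generated free `S`-modules, whose modules are constant from stage `p` on. -/
def HasEventuallyConstantFreeResolution (S : Type*) [CommRing S] (M : Type*) [AddCommGroup M]
    [Module S M] (p : ℕ) : Prop :=
  ∃ (d : ℕ → ℕ) (g : ∀ i : ℕ, (Fin (d (i + 1)) → S) →ₗ[S] (Fin (d i) → S))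
    (ε : (Fin (d 0) → S) →ₗ[S] M),
    (∀ i, p ≤ i → d i = d p) ∧
    Function.Surjective ε ∧
    LinearMap.range (g 0) = LinearMap.ker ε ∧
    ∀ i, LinearMap.range (g (i + 1)) = LinearMap.ker (g i)

end PaperGB

open PaperGB

namespace PaperGB

variable {n : ℕ} {R : Type*} [CommSemiring R]

variable (m : MonomialOrder (Fin n))

lemma toSyn_mDeg (f : MvPolynomial (Fin n) R) :
    m.toSyn (mDeg m f) = f.support.sup fun d => m.toSyn d := by
  rw [mDeg]; exact m.toSyn.apply_symm_apply _

lemma le_mDeg {f : MvPolynomial (Fin n) R} {e : Fin n →₀ ℕ} (h : e ∈ f.support) :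
    m.toSyn e ≤ m.toSyn (mDeg m f) := by
  rw [toSyn_mDeg]; exact Finset.le_sup h

lemma mDeg_mem_support {f : MvPolynomial (Fin n) R} (hf : f ≠ 0) : mDeg m f ∈ f.support := by
  obtain ⟨i, hi, he⟩ := Finset.exists_mem_eq_sup f.support
    (MvPolynomial.support_nonempty.mpr hf) (fun d => m.toSyn d)
  have : mDeg m f = i := by rw [mDeg, he]; exact m.toSyn.symm_apply_apply i
  rwa [this]

lemma mLC_ne_zero {f : MvPolynomial (Fin n) R} (hf : f ≠ 0) : mLC m f ≠ 0 :=
  MvPolynomial.mem_support_iff.mp (mDeg_mem_support m hf)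

lemma mDeg_zero : mDeg m (0 : MvPolynomial (Fin n) R) = 0 := by
  rw [mDeg]
  simp only [MvPolynomial.support_zero, Finset.sup_empty]
  rw [m.bot_eq_zero, map_zero]


lemma toSyn_mDeg_zero : m.toSyn (mDeg m (0 : MvPolynomial (Fin n) R)) = 0 := by
  rw [mDeg_zero, map_zero]

lemma coeff_eq_zero_of_mDeg_lt {f : MvPolynomial (Fin n) R} {e : Fin n →₀ ℕ}
    (h : m.toSyn (mDeg m f) < m.toSyn e) : MvPolynomial.coeff e f = 0 := by
  by_contra hc
  exact absurd (le_mDeg m (MvPolynomial.mem_support_iff.mpr hc)) (not_le.mpr h)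

lemma mDeg_le_of_forall {f : MvPolynomial (Fin n) R} {δ : m.syn}
    (h : ∀ e ∈ f.support, m.toSyn e ≤ δ) : m.toSyn (mDeg m f) ≤ δ := by
  rw [toSyn_mDeg]; exact Finset.sup_le h

lemma mDeg_lt_of_coeff_zero {f : MvPolynomial (Fin n) R} {b : Fin n →₀ ℕ}
    (hf : f ≠ 0) (hle : ∀ e ∈ f.support, m.toSyn e ≤ m.toSyn b)
    (hc : MvPolynomial.coeff b f = 0) : m.toSyn (mDeg m f) < m.toSyn b := by
  refine lt_of_le_of_ne (mDeg_le_of_forall m hle) (fun heq => ?_)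
  have h2 : mDeg m f = b := m.toSyn.injective heq
  apply mLC_ne_zero m hf
  rw [mLC, h2]
  exact hc

lemma mDeg_add_le {f g : MvPolynomial (Fin n) R} :
    m.toSyn (mDeg m (f + g)) ≤ max (m.toSyn (mDeg m f)) (m.toSyn (mDeg m g)) := by
  apply mDeg_le_of_forall
  intro e he
  have := MvPolynomial.mem_support_iff.mp he
  rw [MvPolynomial.coeff_add] at this
  rcases (by by_contra hco; push_neg at hco; rw [hco.1, hco.2, add_zero] at this; exact this rfl :
      MvPolynomial.coeff e f ≠ 0 ∨ MvPolynomial.coeff e g ≠ 0) with h | h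
  · exact le_max_of_le_left (le_mDeg m (MvPolynomial.mem_support_iff.mpr h))
  · exact le_max_of_le_right (le_mDeg m (MvPolynomial.mem_support_iff.mpr h))

lemma mDeg_sum_le {ι : Type*} (s : Finset ι) (h : ι → MvPolynomial (Fin n) R) :
    m.toSyn (mDeg m (∑ i ∈ s, h i)) ≤ s.sup (fun i => m.toSyn (mDeg m (h i))) := by
  classical
  induction s using Finset.induction_on with
  | empty => simp [toSyn_mDeg_zero]
  | @insert a s ha IH =>
      rw [Finset.sum_insert ha, Finset.sup_insert]
      exact le_trans (mDeg_add_le m) (max_le_max (le_refl _) IH)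

lemma mDeg_monomial {d : Fin n →₀ ℕ} {c : R} (hc : c ≠ 0) :
    mDeg m (monomial d c) = d := by
  classical
  rw [mDeg, MvPolynomial.support_monomial, if_neg hc, Finset.sup_singleton]
  exact m.toSyn.symm_apply_apply d

lemma support_monomial_mul_le {d : Fin n →₀ ℕ} {c : R} {f : MvPolynomial (Fin n) R}
    {e : Fin n →₀ ℕ} (he : e ∈ (monomial d c * f).support) :
    m.toSyn e ≤ m.toSyn (d + mDeg m f) := by
  have hne := MvPolynomial.mem_support_iff.mp he
  rw [MvPolynomial.coeff_monomial_mul'] at hne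
  by_cases hde : d ≤ e
  · rw [if_pos hde] at hne
    have h2 : MvPolynomial.coeff (e - d) f ≠ 0 := fun hh => hne (by rw [hh, mul_zero])
    have h3 : m.toSyn (e - d) ≤ m.toSyn (mDeg m f) :=
      le_mDeg m (MvPolynomial.mem_support_iff.mpr h2)
    calc m.toSyn e = m.toSyn (d + (e - d)) := by rw [add_tsub_cancel_of_le hde]
      _ = m.toSyn d + m.toSyn (e - d) := by rw [map_add]
      _ ≤ m.toSyn d + m.toSyn (mDeg m f) := by exact add_le_add_right h3 _
      _ = m.toSyn (d + mDeg m f) := by rw [map_add]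
  · rw [if_neg hde] at hne; exact absurd rfl hne

lemma mDeg_monomial_mul_le {d : Fin n →₀ ℕ} {c : R} {f : MvPolynomial (Fin n) R} :
    m.toSyn (mDeg m (monomial d c * f)) ≤ m.toSyn (d + mDeg m f) :=
  mDeg_le_of_forall m (fun _ he => support_monomial_mul_le m he)

section Domain

variable {R : Type*} [CommRing R] [IsDomain R]

lemma mDeg_mul {f g : MvPolynomial (Fin n) R} (hf : f ≠ 0) (hg : g ≠ 0) :
    mDeg m (f * g) = mDeg m f + mDeg m g ∧ mLC m (f * g) = mLC m f * mLC m g := by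
  classical
  have hco : MvPolynomial.coeff (mDeg m f + mDeg m g) (f * g) = mLC m f * mLC m g := by
    have hkey : ∑ x ∈ Finset.HasAntidiagonal.antidiagonal (mDeg m f + mDeg m g),
        MvPolynomial.coeff x.1 f * MvPolynomial.coeff x.2 g
        = MvPolynomial.coeff (mDeg m f) f * MvPolynomial.coeff (mDeg m g) g := by
      apply Finset.sum_eq_single_of_mem (mDeg m f, mDeg m g) (Finset.HasAntidiagonal.mem_antidiagonal.mpr rfl)
      rintro ⟨u, w⟩ hmem hne
      rw [Finset.HasAntidiagonal.mem_antidiagonal] at hmem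
      by_cases hu : MvPolynomial.coeff u f = 0
      · rw [hu, zero_mul]
      by_cases hw : MvPolynomial.coeff w g = 0
      · rw [hw, mul_zero]
      exfalso
      have h1 : m.toSyn u ≤ m.toSyn (mDeg m f) := le_mDeg m (MvPolynomial.mem_support_iff.mpr hu)
      have h2 : m.toSyn w ≤ m.toSyn (mDeg m g) := le_mDeg m (MvPolynomial.mem_support_iff.mpr hw)
      have h3 : m.toSyn u + m.toSyn w = m.toSyn (mDeg m f) + m.toSyn (mDeg m g) := by
        rw [← map_add, ← map_add, hmem]
      have h4 : m.toSyn u = m.toSyn (mDeg m f) := le_antisymm h1 (by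
        by_contra hcon
        push_neg at hcon
        have := add_lt_add_of_lt_of_le hcon h2
        rw [h3] at this
        exact lt_irrefl _ this)
      have h5 : u = mDeg m f := m.toSyn.injective h4
      have hmem' : u + w = mDeg m f + mDeg m g := hmem
      have h6 : w = mDeg m g := by
        rw [h5] at hmem'
        exact add_left_cancel hmem'
      exact hne (by rw [h5, h6])
    rw [MvPolynomial.coeff_mul, hkey]
    rfl
  have hne : mLC m f * mLC m g ≠ 0 := mul_ne_zero (mLC_ne_zero m hf) (mLC_ne_zero m hg)
  have hmem : mDeg m f + mDeg m g ∈ (f * g).support :=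
    MvPolynomial.mem_support_iff.mpr (by rw [hco]; exact hne)
  have hle : m.toSyn (mDeg m (f * g)) ≤ m.toSyn (mDeg m f + mDeg m g) := by
    apply mDeg_le_of_forall
    intro e he
    obtain ⟨u, hu, w, hw, rfl⟩ := Finset.mem_add.mp (MvPolynomial.support_mul f g he)
    rw [map_add, map_add]
    exact add_le_add (le_mDeg m hu) (le_mDeg m hw)
  have heq : mDeg m (f * g) = mDeg m f + mDeg m g :=
    m.toSyn.injective (le_antisymm hle (le_mDeg m hmem))
  exact ⟨heq, by rw [mLC, heq, hco]⟩

lemma mDeg_sub_mLT_lt {f : MvPolynomial (Fin n) R} (hf : f ≠ 0) (hne : f - mLT m f ≠ 0) :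
    m.toSyn (mDeg m (f - mLT m f)) < m.toSyn (mDeg m f) := by
  apply mDeg_lt_of_coeff_zero m hne
  · intro e he
    have hc := MvPolynomial.mem_support_iff.mp he
    rw [MvPolynomial.coeff_sub, mLT, MvPolynomial.coeff_monomial] at hc
    by_cases heq : mDeg m f = e
    · exact le_of_eq (congrArg m.toSyn heq.symm)
    · rw [if_neg heq, sub_zero] at hc
      exact le_mDeg m (MvPolynomial.mem_support_iff.mpr hc)
  · rw [MvPolynomial.coeff_sub, mLT, MvPolynomial.coeff_monomial, if_pos rfl, mLC, sub_self]


theorem reduces_of_mLT_mem {M : ℕ} (f : Fin M → MvPolynomial (Fin n) R)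
    (hspan : ∀ g, g ∈ Ideal.span (Set.range f) → g ≠ 0 →
      mLT m g ∈ Ideal.span (Set.range fun i => mLT m (f i))) :
    ∀ g ∈ Ideal.span (Set.range f), ReducesToZero m f g := by
  classical
  have main : ∀ δ : m.syn, ∀ g, g ∈ Ideal.span (Set.range f) → m.toSyn (mDeg m g) = δ →
      ReducesToZero m f g := by
    intro δ
    induction δ using WellFoundedLT.induction with
    | _ δ IH =>
      intro g hg hdeg
      by_cases hg0 : g = 0
      · refine ⟨0, by simp [hg0], fun i hi => absurd (by simp) hi⟩
      have hLT := hspan g hg hg0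
      rw [Ideal.mem_span_range_iff_exists_fun] at hLT
      obtain ⟨q, hq⟩ := hLT
      set dd := mDeg m g with hdd
      set r : Fin M → R := fun i =>
        if mDeg m (f i) ≤ dd then MvPolynomial.coeff (dd - mDeg m (f i)) (q i) else 0 with hrdef
      have hr : ∑ i, r i * mLC m (f i) = mLC m g := by
        have hco := congrArg (MvPolynomial.coeff dd) hq
        rw [MvPolynomial.coeff_sum] at hco
        have h1 : MvPolynomial.coeff dd (mLT m g) = mLC m g := by
          rw [mLT, MvPolynomial.coeff_monomial]
          exact if_pos rfl
        rw [h1] at hco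
        rw [← hco]
        apply Finset.sum_congr rfl
        intro i _
        rw [mLT, MvPolynomial.coeff_mul_monomial']
        simp only [hrdef]
        by_cases hle : mDeg m (f i) ≤ dd
        · rw [if_pos hle, if_pos hle]
        · rw [if_neg hle, if_neg hle, zero_mul]
      set g' := g - ∑ i, monomial (dd - mDeg m (f i)) (r i) * f i with hg'def
      have hco' : MvPolynomial.coeff dd g' = 0 := by
        rw [hg'def, MvPolynomial.coeff_sub, MvPolynomial.coeff_sum]
        have : ∀ i ∈ Finset.univ,
            MvPolynomial.coeff dd (monomial (dd - mDeg m (f i)) (r i) * f i)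
              = r i * mLC m (f i) := by
          intro i _
          rw [MvPolynomial.coeff_monomial_mul', if_pos tsub_le_self]
          by_cases hle : mDeg m (f i) ≤ dd
          · rw [tsub_tsub_cancel_of_le hle, mLC]
          · have hr0 : r i = 0 := by simp only [hrdef]; exact if_neg hle
            rw [hr0, zero_mul, zero_mul]
        rw [Finset.sum_congr rfl this, hr]
        exact sub_self _
      have hsupp : ∀ e ∈ g'.support, m.toSyn e ≤ m.toSyn dd := by
        intro e he
        have hce := MvPolynomial.mem_support_iff.mp he
        rw [hg'def, MvPolynomial.coeff_sub] at hce
        by_cases h1 : MvPolynomial.coeff e g ≠ 0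
        · exact le_mDeg m (MvPolynomial.mem_support_iff.mpr h1)
        · push_neg at h1
          rw [h1, zero_sub, neg_ne_zero, MvPolynomial.coeff_sum] at hce
          obtain ⟨i, _, hi⟩ := Finset.exists_ne_zero_of_sum_ne_zero hce
          have hri : r i ≠ 0 := by
            intro h0
            rw [h0] at hi
            simp at hi
          have hle : mDeg m (f i) ≤ dd := by
            by_contra hcon
            exact hri (by simp only [hrdef]; exact if_neg hcon)
          have := support_monomial_mul_le m (MvPolynomial.mem_support_iff.mpr hi)
          calc m.toSyn e ≤ m.toSyn (dd - mDeg m (f i) + mDeg m (f i)) := this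
            _ = m.toSyn dd := by rw [tsub_add_cancel_of_le hle]
      by_cases hg'0 : g' = 0
      · refine ⟨fun i => monomial (dd - mDeg m (f i)) (r i), ?_, ?_⟩
        · have : g = g' + ∑ i, monomial (dd - mDeg m (f i)) (r i) * f i := by
            rw [hg'def]; ring
          rw [this, hg'0, zero_add]
        · intro i hi
          beta_reduce at hi ⊢
          have hri : r i ≠ 0 := fun h0 => hi (by rw [h0, map_zero, zero_mul])
          have hle : mDeg m (f i) ≤ dd := by
            by_contra hcon
            exact hri (by simp only [hrdef]; exact if_neg hcon)
          rw [mDeg_monomial m hri, tsub_add_cancel_of_le hle]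
      · have hlt : m.toSyn (mDeg m g') < δ :=
          hdeg ▸ mDeg_lt_of_coeff_zero m hg'0 hsupp hco'
        have hg'mem : g' ∈ Ideal.span (Set.range f) := by
          apply Ideal.sub_mem _ hg
          exact Ideal.sum_mem _ (fun i _ =>
            Ideal.mul_mem_left _ _ (Ideal.subset_span ⟨i, rfl⟩))
        obtain ⟨p', hp'sum, hp'deg⟩ := IH _ hlt g' hg'mem rfl
        refine ⟨fun i => p' i + monomial (dd - mDeg m (f i)) (r i), ?_, ?_⟩
        · have : g = g' + ∑ i, monomial (dd - mDeg m (f i)) (r i) * f i := by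
            rw [hg'def]; ring
          rw [this, hp'sum, ← Finset.sum_add_distrib]
          apply Finset.sum_congr rfl
          intro i _
          ring
        · intro i hi
          beta_reduce at hi ⊢
          by_cases hri : r i = 0
          · have hpi : p' i + monomial (dd - mDeg m (f i)) (r i) = p' i := by
              rw [hri, map_zero, add_zero]
            rw [hpi] at hi ⊢
            exact le_trans (hp'deg i hi) (le_of_lt (hdeg ▸ hlt))
          · have hle : mDeg m (f i) ≤ dd := by
              by_contra hcon
              exact hri (by simp only [hrdef]; exact if_neg hcon)
            by_cases hp'0 : p' i = 0
            · rw [hp'0, zero_add, mDeg_monomial m hri, tsub_add_cancel_of_le hle]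
            · have h1 : m.toSyn (mDeg m (p' i + monomial (dd - mDeg m (f i)) (r i)))
                  ≤ max (m.toSyn (mDeg m (p' i)))
                    (m.toSyn (mDeg m (monomial (dd - mDeg m (f i)) (r i)))) :=
                mDeg_add_le m
              have h2 : m.toSyn (mDeg m (p' i)) + m.toSyn (mDeg m (f i)) ≤ m.toSyn dd := by
                have hfne : p' i * f i ≠ 0 := mul_ne_zero hp'0 (by
                  intro hf0
                  apply hi
                  rw [hf0, mul_zero])
                calc m.toSyn (mDeg m (p' i)) + m.toSyn (mDeg m (f i))
                    = m.toSyn (mDeg m (p' i) + mDeg m (f i)) := (map_add _ _ _).symm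
                  _ ≤ m.toSyn (mDeg m g') := hp'deg i hfne
                  _ ≤ m.toSyn dd := le_of_lt (hdeg ▸ hlt)
              have h3 : m.toSyn (mDeg m (monomial (dd - mDeg m (f i)) (r i)))
                  + m.toSyn (mDeg m (f i)) ≤ m.toSyn dd := by
                rw [mDeg_monomial m hri, ← map_add, tsub_add_cancel_of_le hle]
              rw [map_add]
              calc m.toSyn (mDeg m (p' i + monomial (dd - mDeg m (f i)) (r i)))
                    + m.toSyn (mDeg m (f i))
                  ≤ max (m.toSyn (mDeg m (p' i)))
                      (m.toSyn (mDeg m (monomial (dd - mDeg m (f i)) (r i))))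
                    + m.toSyn (mDeg m (f i)) := add_le_add_left h1 _
                _ = max (m.toSyn (mDeg m (p' i)) + m.toSyn (mDeg m (f i)))
                    (m.toSyn (mDeg m (monomial (dd - mDeg m (f i)) (r i)))
                      + m.toSyn (mDeg m (f i))) := by rw [max_add_add_right]
                _ ≤ m.toSyn dd := max_le h2 h3
  intro g hg
  exact main (m.toSyn (mDeg m g)) g hg rfl

end Domain

end PaperGB


/-- `l` is a least common multiple of `a` and `b`, with cofactors `qa`, `qb`. -/
def IsLcmChoice {R : Type*} [CommRing R] (a b l qa qb : R) : Prop :=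
  l = a * qa ∧ l = b * qb ∧ ∀ c, a ∣ c → b ∣ c → l ∣ c

/-- The `S_R`-polynomial of `f i` and `f j`, built from cofactor data `u i j`, `v i j`
(so that `lcm (lc (f i)) (lc (f j)) = lc (f i) * u i j = lc (f j) * v i j`). -/
noncomputable def sPolyPID {n : ℕ} {R : Type*} [CommRing R] (m : MonomialOrder (Fin n))
    {M : ℕ} (f : Fin M → MvPolynomial (Fin n) R) (u v : Fin M → Fin M → R) (i j : Fin M) :
    MvPolynomial (Fin n) R :=
  MvPolynomial.monomial ((mDeg m (f i) ⊔ mDeg m (f j)) - mDeg m (f i)) (u i j) * f i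
  - MvPolynomial.monomial ((mDeg m (f i) ⊔ mDeg m (f j)) - mDeg m (f j)) (v i j) * f j

section AlgebraAux
variable {R : Type*} [CommRing R] [IsDomain R] [IsPrincipalIdealRing R]

theorem assoc_distrib {α : Type*} [CommMonoidWithZero α] [UniqueFactorizationMonoid α]
    [Nontrivial α] (x y z : Associates α) : (x ⊔ z) ⊓ (y ⊔ z) = (x ⊓ y) ⊔ z := by
  classical
  have hs : ∀ a b : Associates α, (a ⊔ b).factors = a.factors ⊔ b.factors := fun a b =>
    Associates.prod_factors _
  have hi : ∀ a b : Associates α, (a ⊓ b).factors = a.factors ⊓ b.factors := fun a b =>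
    Associates.prod_factors _
  apply Associates.eq_of_factors_eq_factors
  rw [hi, hs, hs, hs, hi, sup_inf_right]

/-- mk of the generator of span{A} ⊔ span{B} is the inf in Associates. -/
theorem mk_of_sup_span {A B D : R} (hD : Ideal.span {A} ⊔ Ideal.span {B} = Ideal.span {D}) :
    Associates.mk D = Associates.mk A ⊓ Associates.mk B := by
  have hDA : D ∣ A := by
    rw [← Ideal.mem_span_singleton, ← hD]
    exact Ideal.mem_sup_left (Ideal.mem_span_singleton_self A)
  have hDB : D ∣ B := by
    rw [← Ideal.mem_span_singleton, ← hD]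
    exact Ideal.mem_sup_right (Ideal.mem_span_singleton_self B)
  have hDm : D ∈ Ideal.span {A} ⊔ Ideal.span {B} := hD ▸ Ideal.mem_span_singleton_self D
  rw [Submodule.mem_sup] at hDm
  obtain ⟨p, hp, q, hq, hpq⟩ := hDm
  rw [Ideal.mem_span_singleton] at hp hq
  apply le_antisymm
  · exact le_inf (Associates.mk_le_mk_of_dvd hDA) (Associates.mk_le_mk_of_dvd hDB)
  · obtain ⟨e, he⟩ := Associates.mk_surjective (Associates.mk A ⊓ Associates.mk B)
    rw [← he]
    have heA : e ∣ A := Associates.mk_le_mk_iff_dvd.mp (he ▸ inf_le_left)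
    have heB : e ∣ B := Associates.mk_le_mk_iff_dvd.mp (he ▸ inf_le_right)
    apply Associates.mk_le_mk_of_dvd
    rw [← hpq]
    exact dvd_add (heA.trans hp) (heB.trans hq)

/-- mk of the generator of span{A} ⊓ span{B} is the sup in Associates. -/
theorem mk_of_inf_span {A B L : R} (hL : Ideal.span {A} ⊓ Ideal.span {B} = Ideal.span {L}) :
    Associates.mk L = Associates.mk A ⊔ Associates.mk B := by
  have hAL : A ∣ L := by
    rw [← Ideal.mem_span_singleton]
    exact (le_of_eq hL.symm (Ideal.mem_span_singleton_self L)).1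
  have hBL : B ∣ L := by
    rw [← Ideal.mem_span_singleton]
    exact (le_of_eq hL.symm (Ideal.mem_span_singleton_self L)).2
  apply le_antisymm
  · obtain ⟨e, he⟩ := Associates.mk_surjective (Associates.mk A ⊔ Associates.mk B)
    rw [← he]
    have heA : A ∣ e := Associates.mk_le_mk_iff_dvd.mp (he ▸ le_sup_left)
    have heB : B ∣ e := Associates.mk_le_mk_iff_dvd.mp (he ▸ le_sup_right)
    apply Associates.mk_le_mk_of_dvd
    rw [← Ideal.mem_span_singleton, ← hL]
    exact ⟨Ideal.mem_span_singleton.mpr heA, Ideal.mem_span_singleton.mpr heB⟩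
  · exact sup_le (Associates.mk_le_mk_of_dvd hAL) (Associates.mk_le_mk_of_dvd hBL)

theorem span_distrib (A B c : R) :
    (Ideal.span {A} ⊔ Ideal.span {B}) ⊓ Ideal.span {c} ≤
      (Ideal.span {A} ⊓ Ideal.span {c}) ⊔ (Ideal.span {B} ⊓ Ideal.span {c}) := by
  obtain ⟨D, hD⟩ := (IsPrincipalIdealRing.principal (Ideal.span {A} ⊔ Ideal.span {B})).1
  obtain ⟨L₁, hL₁⟩ := (IsPrincipalIdealRing.principal (Ideal.span {A} ⊓ Ideal.span {c})).1
  obtain ⟨L₂, hL₂⟩ := (IsPrincipalIdealRing.principal (Ideal.span {B} ⊓ Ideal.span {c})).1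
  obtain ⟨E, hE⟩ := (IsPrincipalIdealRing.principal (Ideal.span {D} ⊓ Ideal.span {c})).1
  obtain ⟨G, hG⟩ := (IsPrincipalIdealRing.principal (Ideal.span {L₁} ⊔ Ideal.span {L₂})).1
  rw [Ideal.submodule_span_eq] at hD hL₁ hL₂ hE hG
  have key : Associates.mk G = Associates.mk E := by
    rw [mk_of_sup_span hG, mk_of_inf_span hL₁, mk_of_inf_span hL₂, mk_of_inf_span hE,
      mk_of_sup_span hD, assoc_distrib]
  have hGE : G ∣ E := Associates.mk_le_mk_iff_dvd.mp (le_of_eq key)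
  calc (Ideal.span {A} ⊔ Ideal.span {B}) ⊓ Ideal.span {c}
      = Ideal.span {D} ⊓ Ideal.span {c} := by rw [hD]
    _ = Ideal.span {E} := hE
    _ ≤ Ideal.span {G} := (Ideal.span_singleton_le_span_singleton).mpr hGE
    _ = Ideal.span {L₁} ⊔ Ideal.span {L₂} := hG.symm
    _ = _ := by rw [hL₁, hL₂]

theorem span_inf_lcm {A b l : R} (h1 : A ∣ l) (h2 : b ∣ l) (h3 : ∀ z, A ∣ z → b ∣ z → l ∣ z) :
    Ideal.span {A} ⊓ Ideal.span {b} = Ideal.span {l} := by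
  apply le_antisymm
  · intro x hx
    exact Ideal.mem_span_singleton.mpr
      (h3 x (Ideal.mem_span_singleton.mp hx.1) (Ideal.mem_span_singleton.mp hx.2))
  · exact le_inf (Ideal.span_singleton_le_span_singleton.mpr h1)
      (Ideal.span_singleton_le_span_singleton.mpr h2)

theorem inf_span_le {ι : Type*} (T : Finset ι) (a : ι → R) (b : R) (lc : ι → R)
    (h : ∀ i ∈ T, a i ∣ lc i ∧ b ∣ lc i ∧ ∀ z, a i ∣ z → b ∣ z → lc i ∣ z) :
    Ideal.span (a '' T) ⊓ Ideal.span {b} ≤ Ideal.span (lc '' T) := by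
  classical
  induction T using Finset.induction_on with
  | empty => simp
  | @insert i T hiT IH =>
      obtain ⟨d, hd⟩ := (IsPrincipalIdealRing.principal (Ideal.span (a '' T))).1
      rw [Ideal.submodule_span_eq] at hd
      have hi := h i (Finset.mem_insert_self i T)
      calc Ideal.span (a '' ↑(insert i T)) ⊓ Ideal.span {b}
          = (Ideal.span {a i} ⊔ Ideal.span (a '' T)) ⊓ Ideal.span {b} := by
            rw [Finset.coe_insert, Set.image_insert_eq, Ideal.span_insert]
        _ = (Ideal.span {a i} ⊔ Ideal.span {d}) ⊓ Ideal.span {b} := by rw [hd]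
        _ ≤ (Ideal.span {a i} ⊓ Ideal.span {b}) ⊔ (Ideal.span {d} ⊓ Ideal.span {b}) :=
            span_distrib _ _ _
        _ = Ideal.span {lc i} ⊔ (Ideal.span (a '' T) ⊓ Ideal.span {b}) := by
            rw [span_inf_lcm hi.1 hi.2.1 hi.2.2, hd]
        _ ≤ Ideal.span {lc i} ⊔ Ideal.span (lc '' T) :=
            sup_le_sup_left (IH (fun j hj => h j (Finset.mem_insert_of_mem hj))) _
        _ = Ideal.span (lc '' ↑(insert i T)) := by
            rw [Finset.coe_insert, Set.image_insert_eq, Ideal.span_insert]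


theorem syzygy_pid {M : ℕ} (a : Fin M → R) (ha : ∀ i, a i ≠ 0)
    (l u v : Fin M → Fin M → R)
    (hlcm : ∀ i j : Fin M, i < j → IsLcmChoice (a i) (a j) (l i j) (u i j) (v i j))
    (T : Finset (Fin M)) (c : Fin M → R) (hc : ∑ i ∈ T, c i * a i = 0) :
    ∃ r : Fin M × Fin M → R, ∀ k ∈ T,
      c k = ∑ p ∈ (T ×ˢ T).filter (fun p => p.1 < p.2),
        r p * ((if k = p.1 then u p.1 p.2 else 0) + (if k = p.2 then -v p.1 p.2 else 0)) := by
  classical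
  induction T using Finset.induction_on_max generalizing c with
  | empty => exact ⟨0, fun k hk => absurd hk (Finset.notMem_empty k)⟩
  | insert t T' hmax IH =>
    have htT : t ∉ T' := fun h => lt_irrefl t (hmax t h)
    rw [Finset.sum_insert htT] at hc
    have hct : c t * a t ∈ Ideal.span ((fun i => l i t) '' T') := by
      apply inf_span_le T' a (a t) (fun i => l i t)
        (fun i hi => ⟨⟨u i t, (hlcm i t (hmax i hi)).1⟩, ⟨v i t, (hlcm i t (hmax i hi)).2.1⟩,
          (hlcm i t (hmax i hi)).2.2⟩)
      constructor
      · have : c t * a t = -∑ i ∈ T', c i * a i := eq_neg_of_add_eq_zero_left hc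
        rw [this]
        exact neg_mem (Ideal.sum_mem _ (fun i hi =>
          Ideal.mul_mem_left _ (c i) (Ideal.subset_span ⟨i, hi, rfl⟩)))
      · exact Ideal.mem_span_singleton.mpr (Dvd.intro_left _ rfl)
    rw [← Ideal.submodule_span_eq, Finsupp.mem_span_image_iff_linearCombination] at hct
    obtain ⟨w, hw, hlin⟩ := hct
    rw [Finsupp.mem_supported] at hw
    have hlin' : ∑ i ∈ T', w i * l i t = c t * a t := by
      rw [Finsupp.linearCombination_apply, Finsupp.sum] at hlin
      rw [← hlin]
      exact (Finset.sum_subset hw (fun x _ hx => by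
        rw [Finsupp.notMem_support_iff.mp hx, zero_mul])).symm
    have hct' : c t = ∑ i ∈ T', w i * v i t := by
      apply mul_right_cancel₀ (ha t)
      rw [← hlin', Finset.sum_mul]
      exact Finset.sum_congr rfl (fun i hi => by
        rw [(hlcm i t (hmax i hi)).2.1]; ring)
    set c' : Fin M → R := fun i => c i + w i * u i t with hc'def
    have hc' : ∑ i ∈ T', c' i * a i = 0 := by
      have h2 : ∑ i ∈ T', (w i * u i t) * a i = c t * a t := by
        rw [← hlin']
        exact Finset.sum_congr rfl (fun i hi => by
          rw [(hlcm i t (hmax i hi)).1]; ring)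
      have h3 : ∑ i ∈ T', c' i * a i = ∑ i ∈ T', c i * a i + ∑ i ∈ T', (w i * u i t) * a i := by
        rw [← Finset.sum_add_distrib]
        exact Finset.sum_congr rfl (fun i _ => by rw [hc'def]; ring)
      rw [h3, h2]
      linear_combination hc
    obtain ⟨r', hr'⟩ := IH c' hc'
    refine ⟨fun p => if p.2 = t then -(w p.1) else r' p, ?_⟩
    have hP : ((insert t T') ×ˢ (insert t T')).filter (fun p => p.1 < p.2)
        = ((T' ×ˢ T').filter (fun p => p.1 < p.2)) ∪ T'.image (fun i => (i, t)) := by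
      ext p
      simp only [Finset.mem_filter, Finset.mem_product, Finset.mem_insert, Finset.mem_union,
        Finset.mem_image]
      constructor
      · rintro ⟨⟨h1 | h1, h2 | h2⟩, hlt⟩
        · rw [h1, h2] at hlt; exact absurd hlt (lt_irrefl t)
        · rw [h1] at hlt; exact absurd hlt (not_lt.mpr (le_of_lt (hmax _ h2)))
        · exact Or.inr ⟨p.1, h1, by rw [← h2]⟩
        · exact Or.inl ⟨⟨h1, h2⟩, hlt⟩
      · rintro (⟨⟨h1, h2⟩, hlt⟩ | ⟨i, hi, rfl⟩)
        · exact ⟨⟨Or.inr h1, Or.inr h2⟩, hlt⟩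
        · exact ⟨⟨Or.inr hi, Or.inl rfl⟩, hmax i hi⟩
    have hdisj : Disjoint ((T' ×ˢ T').filter (fun p => p.1 < p.2)) (T'.image (fun i => (i, t))) := by
      rw [Finset.disjoint_left]
      rintro p hp hp2
      obtain ⟨i, _, rfl⟩ := Finset.mem_image.mp hp2
      exact htT ((Finset.mem_product.mp (Finset.mem_filter.mp hp).1).2)
    have himg : Set.InjOn (fun i => ((i, t) : Fin M × Fin M)) T' :=
      fun i _ j _ h => congrArg Prod.fst h
    intro k hk
    rw [hP, Finset.sum_union hdisj, Finset.sum_image (fun i hi j hj h => himg hi hj h)]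
    rcases Finset.mem_insert.mp hk with hkt | hkT
    · have hs1 : ∑ p ∈ (T' ×ˢ T').filter (fun p => p.1 < p.2),
          (if p.2 = t then -(w p.1) else r' p) *
          ((if k = p.1 then u p.1 p.2 else 0) + (if k = p.2 then -v p.1 p.2 else 0)) = 0 := by
        apply Finset.sum_eq_zero
        intro p hp
        have hp' := Finset.mem_filter.mp hp
        have hp1 : p.1 ∈ T' := (Finset.mem_product.mp hp'.1).1
        have hp2 : p.2 ∈ T' := (Finset.mem_product.mp hp'.1).2
        have hk1 : k ≠ p.1 := fun h => htT (by rw [← h, hkt] at hp1; exact hp1)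
        have hk2 : k ≠ p.2 := fun h => htT (by rw [← h, hkt] at hp2; exact hp2)
        rw [if_neg hk1, if_neg hk2, add_zero, mul_zero]
      rw [hs1, zero_add, hkt, hct']
      apply Finset.sum_congr rfl
      intro i hi
      have hki : t ≠ i := fun h => htT (h ▸ hi)
      simp only [if_pos rfl, if_neg hki, zero_add, if_true]
      ring
    · have hkt : k ≠ t := fun h => htT (h ▸ hkT)
      have hs1 : ∑ p ∈ (T' ×ˢ T').filter (fun p => p.1 < p.2),
          (if p.2 = t then -(w p.1) else r' p) *
          ((if k = p.1 then u p.1 p.2 else 0) + (if k = p.2 then -v p.1 p.2 else 0)) = c' k := by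
        rw [hr' k hkT]
        apply Finset.sum_congr rfl
        intro p hp
        have hp2 : p.2 ∈ T' := (Finset.mem_product.mp (Finset.mem_filter.mp hp).1).2
        exact (if_neg (fun h : p.2 = t => htT (h ▸ hp2))).symm ▸ rfl
      have hs2 : ∑ i ∈ T', (if ((i, t) : Fin M × Fin M).2 = t then -(w ((i, t) : Fin M × Fin M).1) else r' (i, t)) *
          ((if k = i then u i t else 0) + (if k = t then -v i t else 0)) = -(w k * u k t) := by
        have : ∀ i ∈ T', (if ((i, t) : Fin M × Fin M).2 = t then -(w i) else r' (i, t)) *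
            ((if k = i then u i t else 0) + (if k = t then -v i t else 0))
            = (if k = i then -(w i * u i t) else 0) := by
          intro i _
          rw [if_pos rfl, if_neg hkt, add_zero]
          by_cases h : k = i
          · rw [if_pos h, if_pos h]; ring
          · rw [if_neg h, if_neg h, mul_zero]
        rw [Finset.sum_congr rfl this, Finset.sum_ite_eq T' k (fun i => -(w i * u i t)),
          if_pos hkT]
      rw [hs1, hs2, hc'def]
      ring

end AlgebraAux


section MainLemma

open PaperGB

variable {n : ℕ} {R : Type*} [CommRing R] [IsDomain R] [IsPrincipalIdealRing R]
  (m : MonomialOrder (Fin n))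

theorem sPoly_mDeg_lt {M : ℕ} (f : Fin M → MvPolynomial (Fin n) R) (hf : ∀ i, f i ≠ 0)
    (l u v : Fin M → Fin M → R)
    (hlcm : ∀ i j : Fin M, i < j →
      IsLcmChoice (mLC m (f i)) (mLC m (f j)) (l i j) (u i j) (v i j))
    (i j : Fin M) (hij : i < j) (hne : sPolyPID m f u v i j ≠ 0) :
    m.toSyn (mDeg m (sPolyPID m f u v i j)) < m.toSyn (mDeg m (f i) ⊔ mDeg m (f j)) := by
  set dp := mDeg m (f i) ⊔ mDeg m (f j) with hdp
  have hαi : mDeg m (f i) ≤ dp := le_sup_left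
  have hαj : mDeg m (f j) ≤ dp := le_sup_right
  apply mDeg_lt_of_coeff_zero m hne
  · intro e he
    have hce := MvPolynomial.mem_support_iff.mp he
    rw [sPolyPID, MvPolynomial.coeff_sub] at hce
    have hcase : MvPolynomial.coeff e (MvPolynomial.monomial (dp - mDeg m (f i)) (u i j) * f i) ≠ 0
        ∨ MvPolynomial.coeff e (MvPolynomial.monomial (dp - mDeg m (f j)) (v i j) * f j) ≠ 0 := by
      by_contra hcon
      push_neg at hcon
      rw [hcon.1, hcon.2, sub_zero] at hce
      exact hce rfl
    rcases hcase with hco | hco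
    · calc m.toSyn e ≤ m.toSyn (dp - mDeg m (f i) + mDeg m (f i)) :=
            support_monomial_mul_le m (MvPolynomial.mem_support_iff.mpr hco)
        _ = m.toSyn dp := by rw [tsub_add_cancel_of_le hαi]
    · calc m.toSyn e ≤ m.toSyn (dp - mDeg m (f j) + mDeg m (f j)) :=
            support_monomial_mul_le m (MvPolynomial.mem_support_iff.mpr hco)
        _ = m.toSyn dp := by rw [tsub_add_cancel_of_le hαj]
  · rw [sPolyPID, MvPolynomial.coeff_sub, MvPolynomial.coeff_monomial_mul',
      MvPolynomial.coeff_monomial_mul', if_pos tsub_le_self, if_pos tsub_le_self,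
      tsub_tsub_cancel_of_le hαi, tsub_tsub_cancel_of_le hαj]
    have h1 := (hlcm i j hij).1
    have h2 := (hlcm i j hij).2.1
    show u i j * mLC m (f i) - v i j * mLC m (f j) = 0
    linear_combination h2 - h1

theorem main_buchberger {M : ℕ} (f : Fin M → MvPolynomial (Fin n) R)
    (hf : ∀ i, f i ≠ 0) (l u v : Fin M → Fin M → R)
    (hlcm : ∀ i j : Fin M, i < j →
      IsLcmChoice (mLC m (f i)) (mLC m (f j)) (l i j) (u i j) (v i j))
    (hS : ∀ i j : Fin M, i < j → ReducesToZero m f (sPolyPID m f u v i j)) :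
    ∀ δ : m.syn, ∀ h : Fin M → MvPolynomial (Fin n) R,
      (∀ i, m.toSyn (mDeg m (h i * f i)) ≤ δ) → (∑ i, h i * f i ≠ 0) →
      mLT m (∑ i, h i * f i) ∈ Ideal.span (Set.range fun i => mLT m (f i)) := by
  classical
  intro δ
  induction δ using WellFoundedLT.induction with
  | _ δ IH =>
    intro h hbound hne0
    set g := ∑ i, h i * f i with hgdef
    set T : Finset (Fin M) :=
      Finset.univ.filter (fun i => h i * f i ≠ 0 ∧ m.toSyn (mDeg m (h i * f i)) = δ) with hTdef
    have hmemT : ∀ {i}, i ∈ T ↔ (h i * f i ≠ 0 ∧ m.toSyn (mDeg m (h i * f i)) = δ) := by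
      intro i
      simp [hTdef]
    have hzero_bot : ∀ k : MvPolynomial (Fin n) R, k = 0 → m.toSyn (mDeg m k) = ⊥ := by
      intro k hk
      rw [hk, mDeg_zero, map_zero, m.bot_eq_zero]
    by_cases hT : T = ∅
    · have hbot : (⊥ : m.syn) < δ := by
        rcases eq_bot_or_bot_lt δ with h1 | h1
        · exfalso
          have hall : ∀ i, h i * f i = 0 := by
            intro i
            by_contra hz
            have h2 : m.toSyn (mDeg m (h i * f i)) = δ := by
              rw [h1]
              exact le_bot_iff.mp (h1 ▸ hbound i)
            exact Finset.notMem_empty i (hT ▸ hmemT.mpr ⟨hz, h2⟩)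
          exact hne0 (by rw [hgdef]; exact Finset.sum_eq_zero (fun i _ => hall i))
        · exact h1
      have hlt : ∀ i, m.toSyn (mDeg m (h i * f i)) < δ := by
        intro i
        rcases eq_or_ne (h i * f i) 0 with hz | hz
        · rw [hzero_bot _ hz]; exact hbot
        · exact lt_of_le_of_ne (hbound i)
            (fun he => (Finset.notMem_empty i) (hT ▸ hmemT.mpr ⟨hz, he⟩))
      refine IH (Finset.univ.sup (fun i => m.toSyn (mDeg m (h i * f i))))
        ((Finset.sup_lt_iff hbot).mpr (fun i _ => hlt i)) h
        (fun i => Finset.le_sup (f := fun i => m.toSyn (mDeg m (h i * f i))) (Finset.mem_univ i)) hne0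
    · -- T nonempty
      set dd := m.toSyn.symm δ with hdd
      have htdd : m.toSyn dd = δ := m.toSyn.apply_symm_apply δ
      have hTdeg : ∀ i ∈ T, mDeg m (h i * f i) = dd := fun i hi =>
        m.toSyn.injective (by rw [(hmemT.mp hi).2, htdd])
      have hTh : ∀ i ∈ T, h i ≠ 0 := fun i hi h0 => (hmemT.mp hi).1 (by rw [h0, zero_mul])
      have hδi : ∀ i ∈ T, mDeg m (h i) + mDeg m (f i) = dd := fun i hi => by
        rw [← (mDeg_mul m (hTh i hi) (hf i)).1]
        exact hTdeg i hi
      have hαdd : ∀ i ∈ T, mDeg m (f i) ≤ dd := fun i hi => (hδi i hi) ▸ le_add_self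
      have hgbound : m.toSyn (mDeg m g) ≤ δ := by
        rw [hgdef]
        exact le_trans (mDeg_sum_le m Finset.univ (fun i => h i * f i))
          (Finset.sup_le (fun i _ => hbound i))
      have hcoeffg : MvPolynomial.coeff dd g = ∑ i ∈ T, mLC m (h i) * mLC m (f i) := by
        rw [hgdef, MvPolynomial.coeff_sum]
        rw [← Finset.sum_subset (Finset.subset_univ T) ?van]
        case van =>
          intro i _ hiT
          rcases eq_or_ne (h i * f i) 0 with hz | hz
          · rw [hz, MvPolynomial.coeff_zero]
          · have hltd : m.toSyn (mDeg m (h i * f i)) < m.toSyn dd := by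
              rw [htdd]
              exact lt_of_le_of_ne (hbound i) (fun he => hiT (hmemT.mpr ⟨hz, he⟩))
            exact coeff_eq_zero_of_mDeg_lt m hltd
        apply Finset.sum_congr rfl
        intro i hi
        rw [← hTdeg i hi]
        exact (mDeg_mul m (hTh i hi) (hf i)).2
      by_cases hc0 : MvPolynomial.coeff dd g = 0
      · -- leading coefficients cancel: use the syzygy
        have hsyz : ∑ i ∈ T, mLC m (h i) * mLC m (f i) = 0 := by rw [← hcoeffg]; exact hc0
        obtain ⟨r, hr⟩ := syzygy_pid (fun i => mLC m (f i)) (fun i => mLC_ne_zero m (hf i))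
          l u v hlcm T (fun i => mLC m (h i)) hsyz
        set P := (T ×ˢ T).filter (fun p => p.1 < p.2) with hPdef
        have hPmem : ∀ p ∈ P, p.1 ∈ T ∧ p.2 ∈ T ∧ p.1 < p.2 := by
          intro p hp
          have hp' := Finset.mem_filter.mp hp
          exact ⟨(Finset.mem_product.mp hp'.1).1, (Finset.mem_product.mp hp'.1).2, hp'.2⟩
        have hdple : ∀ p ∈ P, mDeg m (f p.1) ⊔ mDeg m (f p.2) ≤ dd := fun p hp =>
          sup_le (hαdd _ (hPmem p hp).1) (hαdd _ (hPmem p hp).2.1)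
        have hQex : ∀ p : Fin M × Fin M, p.1 < p.2 → ∃ Q : Fin M → MvPolynomial (Fin n) R,
            sPolyPID m f u v p.1 p.2 = ∑ k, Q k * f k ∧
            ∀ k, Q k * f k ≠ 0 → m.toSyn (mDeg m (Q k * f k))
              ≤ m.toSyn (mDeg m (sPolyPID m f u v p.1 p.2)) := by
          intro p hp
          obtain ⟨Q, h1, h2⟩ := hS p.1 p.2 hp
          refine ⟨Q, h1, fun k hk => ?_⟩
          have hQk : Q k ≠ 0 := fun hz => hk (by rw [hz, zero_mul])
          rw [(mDeg_mul m hQk (hf k)).1, map_add]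
          have h3 := h2 k hk
          rwa [map_add] at h3
        set Q : Fin M × Fin M → Fin M → MvPolynomial (Fin n) R := fun p =>
          if hp : p.1 < p.2 ∧ sPolyPID m f u v p.1 p.2 ≠ 0 then Classical.choose (hQex p hp.1)
          else 0 with hQdef
        have hQsum : ∀ p ∈ P, sPolyPID m f u v p.1 p.2 = ∑ k, Q p k * f k := by
          intro p hp
          by_cases hsp : sPolyPID m f u v p.1 p.2 = 0
          · have hQ0 : Q p = 0 := by rw [hQdef]; exact dif_neg (fun hcon => hcon.2 hsp)
            rw [hsp, hQ0]
            simp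
          · have hplt := (hPmem p hp).2.2
            have hQp : Q p = Classical.choose (hQex p hplt) := by
              rw [hQdef]; exact dif_pos ⟨hplt, hsp⟩
            rw [hQp]
            exact (Classical.choose_spec (hQex p hplt)).1
        have hQdeg : ∀ p ∈ P, ∀ k, Q p k * f k ≠ 0 →
            m.toSyn (mDeg m (Q p k * f k)) < m.toSyn (mDeg m (f p.1) ⊔ mDeg m (f p.2)) := by
          intro p hp k hk
          have hplt := (hPmem p hp).2.2
          by_cases hsp : sPolyPID m f u v p.1 p.2 = 0
          · exfalso
            apply hk
            have hQ0 : Q p = 0 := by rw [hQdef]; exact dif_neg (fun hcon => hcon.2 hsp)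
            rw [hQ0]
            simp
          · have hQp : Q p = Classical.choose (hQex p hplt) := by
              rw [hQdef]; exact dif_pos ⟨hplt, hsp⟩
            rw [hQp] at hk ⊢
            exact lt_of_le_of_lt ((Classical.choose_spec (hQex p hplt)).2 k hk)
              (sPoly_mDeg_lt m f hf l u v hlcm p.1 p.2 hplt hsp)
        have hbot : (⊥ : m.syn) < δ := by
          rcases eq_bot_or_bot_lt δ with h1 | h1
          · exfalso
            have hgb : m.toSyn (mDeg m g) = ⊥ := le_bot_iff.mp (h1 ▸ hgbound)
            have hgdd0 : mDeg m g = dd := by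
              apply m.toSyn.injective
              rw [hgb, htdd, h1]
            apply mLC_ne_zero m hne0
            rw [mLC, hgdd0]
            exact hc0
          · exact h1
        set h' : Fin M → MvPolynomial (Fin n) R := fun k =>
          (if k ∈ T then h k - mLT m (h k) else h k)
          + ∑ p ∈ P, MvPolynomial.monomial (dd - (mDeg m (f p.1) ⊔ mDeg m (f p.2))) (r p) * Q p k
          with hh'def
        have claim2 : ∑ p ∈ P,
            MvPolynomial.monomial (dd - (mDeg m (f p.1) ⊔ mDeg m (f p.2))) (r p)
              * sPolyPID m f u v p.1 p.2
            = ∑ k ∈ T, mLT m (h k) * f k := by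
          have hRHS : ∀ k ∈ T, mLT m (h k) * f k = ∑ p ∈ P,
              (MvPolynomial.monomial (dd - mDeg m (f k))
                (r p * ((if k = p.1 then u p.1 p.2 else 0)
                  + (if k = p.2 then -v p.1 p.2 else 0)))) * f k := by
            intro k hk
            have hdegh : mDeg m (h k) = dd - mDeg m (f k) := eq_tsub_of_add_eq (hδi k hk)
            have hrk : mLC m (h k) = ∑ p ∈ P,
                r p * ((if k = p.1 then u p.1 p.2 else 0)
                  + (if k = p.2 then -v p.1 p.2 else 0)) := hr k hk
            rw [mLT, hdegh, hrk, map_sum, Finset.sum_mul]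
          rw [Finset.sum_congr rfl hRHS, Finset.sum_comm]
          apply Finset.sum_congr rfl
          intro p hp
          have hp1T := (hPmem p hp).1
          have hp2T := (hPmem p hp).2.1
          have hne12 : p.1 ≠ p.2 := ne_of_lt (hPmem p hp).2.2
          have hsplit : ∀ k ∈ T,
              (MvPolynomial.monomial (dd - mDeg m (f k))
                (r p * ((if k = p.1 then u p.1 p.2 else 0)
                  + (if k = p.2 then -v p.1 p.2 else 0)))) * f k
              = (if k = p.1 then
                  MvPolynomial.monomial (dd - mDeg m (f p.1)) (r p * u p.1 p.2) * f p.1 else 0)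
                + (if k = p.2 then
                  -(MvPolynomial.monomial (dd - mDeg m (f p.2)) (r p * v p.1 p.2) * f p.2) else 0) := by
            intro k _
            by_cases h1 : k = p.1
            · subst h1
              rw [if_pos rfl, if_pos rfl, if_neg hne12, if_neg hne12, add_zero, add_zero]
            · by_cases h2 : k = p.2
              · subst h2
                rw [if_neg h1, if_neg h1, if_pos rfl, if_pos rfl, zero_add, zero_add,
                  mul_neg, map_neg, neg_mul]
              · rw [if_neg h1, if_neg h1, if_neg h2, if_neg h2, add_zero, add_zero,
                  mul_zero, map_zero, zero_mul]
          rw [Finset.sum_congr rfl hsplit, Finset.sum_add_distrib,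
            Finset.sum_ite_eq' T p.1, Finset.sum_ite_eq' T p.2, if_pos hp1T, if_pos hp2T,
            sPolyPID, mul_sub, ← mul_assoc, ← mul_assoc, MvPolynomial.monomial_mul,
            MvPolynomial.monomial_mul, tsub_add_tsub_cancel (hdple p hp) le_sup_left,
            tsub_add_tsub_cancel (hdple p hp) le_sup_right, ← sub_eq_add_neg]
        have hkey : ∑ k, h' k * f k = g := by
          have hsplitk : ∀ k : Fin M, h' k * f k
              = (h k * f k - (if k ∈ T then mLT m (h k) * f k else 0))
                + ∑ p ∈ P, MvPolynomial.monomial (dd - (mDeg m (f p.1) ⊔ mDeg m (f p.2))) (r p)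
                  * Q p k * f k := by
            intro k
            simp only [hh'def]
            by_cases hk : k ∈ T
            · rw [if_pos hk, if_pos hk, add_mul, Finset.sum_mul, sub_mul]
            · rw [if_neg hk, if_neg hk, sub_zero, add_mul, Finset.sum_mul]
          rw [Finset.sum_congr rfl (fun k _ => hsplitk k), Finset.sum_add_distrib,
            Finset.sum_sub_distrib]
          have e1 : ∑ k, (if k ∈ T then mLT m (h k) * f k else 0) = ∑ k ∈ T, mLT m (h k) * f k := by
            rw [Finset.sum_ite_mem, Finset.univ_inter]
          have e2 : ∑ k : Fin M, ∑ p ∈ P,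
              MvPolynomial.monomial (dd - (mDeg m (f p.1) ⊔ mDeg m (f p.2))) (r p) * Q p k * f k
              = ∑ p ∈ P, MvPolynomial.monomial (dd - (mDeg m (f p.1) ⊔ mDeg m (f p.2))) (r p)
                * sPolyPID m f u v p.1 p.2 := by
            rw [Finset.sum_comm]
            apply Finset.sum_congr rfl
            intro p hp
            rw [hQsum p hp, Finset.mul_sum]
            apply Finset.sum_congr rfl
            intro k _
            rw [mul_assoc]
          rw [e1, e2, claim2, hgdef, sub_add_cancel]
        have hbounds : ∀ k, m.toSyn (mDeg m (h' k * f k)) < δ := by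
          intro k
          have hsplitk : h' k * f k = (if k ∈ T then h k - mLT m (h k) else h k) * f k
              + ∑ p ∈ P, MvPolynomial.monomial (dd - (mDeg m (f p.1) ⊔ mDeg m (f p.2))) (r p)
                * (Q p k * f k) := by
            simp only [hh'def]
            rw [add_mul, Finset.sum_mul]
            congr 1
            apply Finset.sum_congr rfl
            intro p _
            rw [mul_assoc]
          rw [hsplitk]
          apply lt_of_le_of_lt (mDeg_add_le m)
          rw [max_lt_iff]
          constructor
          · by_cases hk : k ∈ T
            · rw [if_pos hk]
              rcases eq_or_ne (h k - mLT m (h k)) 0 with hz | hz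
              · rw [hz, zero_mul, hzero_bot _ rfl]
                exact hbot
              · rw [(mDeg_mul m hz (hf k)).1, map_add]
                calc m.toSyn (mDeg m (h k - mLT m (h k))) + m.toSyn (mDeg m (f k))
                    < m.toSyn (mDeg m (h k)) + m.toSyn (mDeg m (f k)) :=
                      add_lt_add_left (mDeg_sub_mLT_lt m (hTh k hk) hz) _
                  _ = m.toSyn (mDeg m (h k) + mDeg m (f k)) := (map_add _ _ _).symm
                  _ = δ := by rw [hδi k hk, htdd]
            · rw [if_neg hk]
              rcases eq_or_ne (h k * f k) 0 with hz | hz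
              · rw [hzero_bot _ hz]
                exact hbot
              · exact lt_of_le_of_ne (hbound k) (fun he => hk (hmemT.mpr ⟨hz, he⟩))
          · apply lt_of_le_of_lt (mDeg_sum_le m P _)
            rw [Finset.sup_lt_iff hbot]
            intro p hp
            rcases eq_or_ne (Q p k * f k) 0 with hz | hz
            · rw [hz, mul_zero, hzero_bot _ rfl]
              exact hbot
            · apply lt_of_le_of_lt (mDeg_monomial_mul_le m)
              rw [map_add]
              calc m.toSyn (dd - (mDeg m (f p.1) ⊔ mDeg m (f p.2)))
                    + m.toSyn (mDeg m (Q p k * f k))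
                  < m.toSyn (dd - (mDeg m (f p.1) ⊔ mDeg m (f p.2)))
                    + m.toSyn (mDeg m (f p.1) ⊔ mDeg m (f p.2)) :=
                    add_lt_add_right (hQdeg p hp k hz) _
                _ = m.toSyn (dd - (mDeg m (f p.1) ⊔ mDeg m (f p.2))
                    + (mDeg m (f p.1) ⊔ mDeg m (f p.2))) := (map_add _ _ _).symm
                _ = δ := by rw [tsub_add_cancel_of_le (hdple p hp), htdd]
        have hne0' : ∑ k, h' k * f k ≠ 0 := by rw [hkey]; exact hne0
        have hfin := IH (Finset.univ.sup (fun k => m.toSyn (mDeg m (h' k * f k))))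
          ((Finset.sup_lt_iff hbot).mpr (fun k _ => hbounds k)) h'
          (fun k => Finset.le_sup (f := fun k => m.toSyn (mDeg m (h' k * f k)))
            (Finset.mem_univ k)) hne0'
        rw [hkey] at hfin
        exact hfin
      · -- leading coefficients do not cancel
        have hgdd : mDeg m g = dd := by
          apply m.toSyn.injective
          apply le_antisymm
          · rw [htdd]; exact hgbound
          · exact le_mDeg m (MvPolynomial.mem_support_iff.mpr hc0)
        have hLTg : mLT m g = ∑ i ∈ T,
            MvPolynomial.monomial (mDeg m (h i)) (mLC m (h i)) * mLT m (f i) := by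
          rw [mLT, hgdd, mLC, hgdd, hcoeffg, map_sum]
          apply Finset.sum_congr rfl
          intro i hi
          rw [mLT, MvPolynomial.monomial_mul, ← hδi i hi]
        rw [hLTg]
        exact Ideal.sum_mem _ (fun i _ =>
          Ideal.mul_mem_left _ _ (Ideal.subset_span ⟨i, rfl⟩))

end MainLemma

/-- Buchberger's criterion over a PID. -/
theorem buchberger_criterion_PID
    {n : ℕ} {R : Type*} [CommRing R] [IsDomain R] [IsPrincipalIdealRing R]
    (m : MonomialOrder (Fin n))
    {M : ℕ} (f : Fin M → MvPolynomial (Fin n) R) (hf : ∀ i, f i ≠ 0)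
    (l u v : Fin M → Fin M → R)
    (hlcm : ∀ i j : Fin M, i < j →
      IsLcmChoice (mLC m (f i)) (mLC m (f j)) (l i j) (u i j) (v i j)) :
    IsGroebnerBasis m (Ideal.span (Set.range f)) f ↔
      ∀ i j : Fin M, i < j → ReducesToZero m f (sPolyPID m f u v i j) := by
  constructor
  · intro hGB i j hij
    have hmem : sPolyPID m f u v i j ∈ Ideal.span (Set.range f) := by
      rw [sPolyPID]
      exact Ideal.sub_mem _
        (Ideal.mul_mem_left _ _ (Ideal.subset_span ⟨i, rfl⟩))
        (Ideal.mul_mem_left _ _ (Ideal.subset_span ⟨j, rfl⟩))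
    apply reduces_of_mLT_mem m f ?_ _ hmem
    intro g hg hg0
    rw [hGB.2.2, mLTIdeal]
    exact Ideal.subset_span ⟨g, ⟨hg, hg0⟩, rfl⟩
  · intro hS
    refine ⟨hf, fun i => Ideal.subset_span ⟨i, rfl⟩, le_antisymm ?_ ?_⟩
    · apply Ideal.span_le.mpr
      rintro x ⟨i, rfl⟩
      exact Ideal.subset_span ⟨f i, ⟨Ideal.subset_span ⟨i, rfl⟩, hf i⟩, rfl⟩
    · rw [mLTIdeal]
      apply Ideal.span_le.mpr
      rintro x ⟨g, ⟨hgI, hg0⟩, rfl⟩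
      obtain ⟨h, hh⟩ := Ideal.mem_span_range_iff_exists_fun.mp hgI
      have := main_buchberger m f hf l u v hlcm hS
        (Finset.univ.sup (fun i => m.toSyn (mDeg m (h i * f i)))) h
        (fun i => Finset.le_sup (f := fun i => m.toSyn (mDeg m (h i * f i)))
          (Finset.mem_univ i)) (by rw [hh]; exact hg0)
      rw [hh] at this
      exact this
end

section
/- Let R be a principal ideal domain, S = R[x_1,…,x_n], and F = S^r with standard basis e_1,…,e_r. For l = 1,…,m let f_l = c_l·x^{u_l}·e_{k_l} with c_l ∈ R nonzero, u_l ∈ ℕ^n, k_l ∈ {1,…,r}. Let φ : S^m → F be the S-linear map sending the standard basis vector g_l to f_l. Then the kernel of φ is generated by the elements r_{ij} = (l_{ij}/c_i)·x^{sup(u_i,u_j)−u_i}·g_i − (l_{ij}/c_j)·x^{sup(u_i,u_j)−u_j}·g_j, taken over all pairs 1 ≤ i < j ≤ m with k_i = k_j, where l_{ij} is a least common multiple of c_i and c_j and sup(u_i,u_j) is the componentwise maximum in ℕ^n. -/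
open MvPolynomial
open scoped MonomialOrder

open PaperGB

section AuxForSyzygies

theorem pid_sup_inf_le {R : Type*} [CommRing R] [IsDomain R] [IsPrincipalIdealRing R]
    (I J K : Ideal R) : (I ⊔ J) ⊓ K ≤ (I ⊓ K) ⊔ (J ⊓ K) := by
  obtain ⟨a, ha⟩ := (IsPrincipalIdealRing.principal (I ⊔ J)).principal
  obtain ⟨cg, hK⟩ := (IsPrincipalIdealRing.principal K).principal
  rw [Ideal.submodule_span_eq] at ha hK
  rcases eq_or_ne cg 0 with h0 | h0
  · intro x hx
    have hxK : x ∈ K := hx.2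
    rw [hK, h0, Set.singleton_zero, Ideal.span_zero] at hxK
    rw [Submodule.mem_bot] at hxK
    subst hxK
    exact Submodule.zero_mem _
  obtain ⟨m, hm⟩ := (IsPrincipalIdealRing.principal (Ideal.span {a} ⊔ K)).principal
  rw [Ideal.submodule_span_eq] at hm
  have hmmem : m ∈ Ideal.span {a} ⊔ K := by rw [hm]; exact Ideal.subset_span rfl
  obtain ⟨xa, hxa, xc, hxc, hsum⟩ := Submodule.mem_sup.mp hmmem
  obtain ⟨σ, hσ⟩ := Ideal.mem_span_singleton.mp hxa
  rw [hK] at hxc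
  obtain ⟨τ, hτ⟩ := Ideal.mem_span_singleton.mp hxc
  have hma : m ∣ a := by
    rw [← Ideal.mem_span_singleton, ← hm]
    exact Submodule.mem_sup_left (Ideal.subset_span rfl)
  have hmc : m ∣ cg := by
    rw [← Ideal.mem_span_singleton, ← hm]
    exact Submodule.mem_sup_right (hK ▸ Ideal.subset_span rfl)
  obtain ⟨a1, ha1⟩ := hma
  obtain ⟨c1, hc1⟩ := hmc
  have hm0 : m ≠ 0 := by rintro rfl; exact h0 (by simpa using hc1)
  have hamem : a ∈ I ⊔ J := ha ▸ Ideal.subset_span rfl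
  obtain ⟨p, hp, q, hq, hpq⟩ := Submodule.mem_sup.mp hamem
  intro x hx
  have hax : a ∣ x := Ideal.mem_span_singleton.mp (ha ▸ hx.1)
  have hcx : cg ∣ x := Ideal.mem_span_singleton.mp (hK ▸ hx.2)
  obtain ⟨z, hz⟩ := hax
  obtain ⟨y, hy⟩ := hcx
  set W := σ * y + τ * z with hW
  have hxeq : x = a * (c1 * W) := by
    have key : m * x = m * (a * (c1 * W)) := by
      have h1 : m * x = xa * x + xc * x := by rw [← add_mul, hsum]
      rw [hσ, hτ] at h1
      nth_rewrite 2 [hy] at h1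
      nth_rewrite 2 [hz] at h1
      rw [h1, hc1, hW]; ring
    exact mul_left_cancel₀ hm0 key
  have hmp : m ∣ p := by
    rw [← Ideal.mem_span_singleton, ← hm]
    exact Submodule.mem_sup_left (ha ▸ Submodule.mem_sup_left hp : p ∈ Ideal.span {a})
  have hmq : m ∣ q := by
    rw [← Ideal.mem_span_singleton, ← hm]
    exact Submodule.mem_sup_left (ha ▸ Submodule.mem_sup_right hq : q ∈ Ideal.span {a})
  obtain ⟨p1, hp1⟩ := hmp
  obtain ⟨q1, hq1⟩ := hmq
  refine Submodule.mem_sup.mpr ⟨p * (c1 * W), ⟨Ideal.mul_mem_right _ _ hp, ?_⟩,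
    q * (c1 * W), ⟨Ideal.mul_mem_right _ _ hq, ?_⟩, ?_⟩
  · show p * (c1 * W) ∈ K
    rw [hK, Ideal.mem_span_singleton]
    exact ⟨p1 * W, by rw [hc1, hp1]; ring⟩
  · show q * (c1 * W) ∈ K
    rw [hK, Ideal.mem_span_singleton]
    exact ⟨q1 * W, by rw [hc1, hq1]; ring⟩
  · rw [hxeq, ← hpq]; ring

theorem pid_split_dvd_sum {R : Type*} [CommRing R] [IsDomain R] [IsPrincipalIdealRing R]
    {ι : Type*} [DecidableEq ι] (T : Finset ι) (cc : ι → R) (d : R) :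
    ∀ x, x ∈ Ideal.span (cc '' T) → d ∣ x →
    ∃ μ : ι → R, x = ∑ t ∈ T, μ t * cc t ∧ ∀ t ∈ T, d ∣ μ t * cc t := by
  classical
  induction T using Finset.induction_on with
  | empty =>
    intro x hx hd
    simp only [Finset.coe_empty, Set.image_empty, Ideal.span_empty, Submodule.mem_bot] at hx
    exact ⟨0, by simp [hx], by simp⟩
  | insert a T' ha ih =>
    intro x hx hd
    rw [Finset.coe_insert, Set.image_insert_eq, Ideal.span_insert] at hx
    have hxK : x ∈ (Ideal.span {cc a} ⊔ Ideal.span (cc '' ↑T')) ⊓ Ideal.span {d} :=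
      ⟨hx, Ideal.mem_span_singleton.mpr hd⟩
    obtain ⟨x1, hx1, x2, hx2, hsum⟩ := Submodule.mem_sup.mp (pid_sup_inf_le _ _ _ hxK)
    obtain ⟨w, hw⟩ := Ideal.mem_span_singleton.mp hx1.1
    have hd1 : d ∣ x1 := Ideal.mem_span_singleton.mp hx1.2
    obtain ⟨μ', hμ'1, hμ'2⟩ := ih x2 hx2.1 (Ideal.mem_span_singleton.mp hx2.2)
    refine ⟨Function.update μ' a w, ?_, ?_⟩
    · rw [Finset.sum_insert ha, Function.update_self]
      rw [Finset.sum_congr rfl (fun t ht =>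
        by rw [Function.update_of_ne (by rintro rfl; exact ha ht)])]
      rw [← hμ'1, ← hsum, hw]; ring
    · intro t ht
      rcases Finset.mem_insert.mp ht with rfl | ht'
      · rw [Function.update_self]
        obtain ⟨e, he⟩ := hd1
        exact ⟨e, by rw [mul_comm, ← hw, he]⟩
      · rw [Function.update_of_ne (by rintro rfl; exact ha ht')]; exact hμ'2 t ht'

theorem key_syz {n : ℕ} {R : Type*} [CommRing R] [IsDomain R] [IsPrincipalIdealRing R]
    {r M : ℕ} (c : Fin M → R) (hc : ∀ i, c i ≠ 0)
    (u : Fin M → (Fin n →₀ ℕ)) (kk : Fin M → Fin r)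
    (l a b : Fin M → Fin M → R)
    (hlcm : ∀ i j : Fin M, i < j → IsLcmChoice (c i) (c j) (l i j) (a i j) (b i j))
    (rr : Fin M → Fin M → (Fin M → MvPolynomial (Fin n) R))
    (hrr : ∀ i j : Fin M, rr i j =
      Pi.single i (MvPolynomial.monomial ((u i ⊔ u j) - u i) (a i j))
      - Pi.single j (MvPolynomial.monomial ((u i ⊔ u j) - u j) (b i j)))
    (v : Fin n →₀ ℕ) (k : Fin r) (T : Finset (Fin M)) :
    ∀ lam : Fin M → R, (∀ t ∈ T, kk t = k ∧ u t ≤ v) → (∑ t ∈ T, lam t * c t = 0) →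
    (fun t => if t ∈ T then (MvPolynomial.monomial (v - u t) (lam t) : MvPolynomial (Fin n) R)
      else 0)
      ∈ Submodule.span (MvPolynomial (Fin n) R)
          {h | ∃ i j : Fin M, i < j ∧ kk i = kk j ∧ h = rr i j} := by
  classical
  induction T using Finset.induction_on_max with
  | empty =>
    intro lam _ _
    convert Submodule.zero_mem _ using 1
    funext t; simp
  | insert s T' hlt ih =>
    intro lam hTk hsum
    have hs : s ∉ T' := fun h => lt_irrefl s (hlt s h)
    rw [Finset.sum_insert hs] at hsum
    have hmem : c s * lam s ∈ Ideal.span (c '' ↑T') := by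
      have : c s * lam s = -∑ t ∈ T', lam t * c t := by
        linear_combination hsum
      rw [this]
      exact Submodule.neg_mem _ (Submodule.sum_mem _ (fun t ht =>
        Ideal.mul_mem_left _ _ (Ideal.subset_span ⟨t, ht, rfl⟩)))
    obtain ⟨μ, hμ1, hμ2⟩ := pid_split_dvd_sum T' c (c s) _ hmem ⟨lam s, rfl⟩
    have hex : ∀ t, ∃ z, (t ∈ T' → μ t * c t = l t s * z) := by
      intro t
      by_cases ht : t ∈ T'
      · have hts : t < s := hlt t ht
        have hdvd := (hlcm t s hts).2.2 (μ t * c t) ⟨μ t, mul_comm _ _⟩ (hμ2 t ht)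
        obtain ⟨z, hz⟩ := hdvd
        exact ⟨z, fun _ => hz⟩
      · exact ⟨0, fun h => absurd h ht⟩
    choose ν hν using hex
    have hlams : lam s = ∑ t ∈ T', ν t * b t s := by
      have h1 : c s * lam s = ∑ t ∈ T', c s * (ν t * b t s) := by
        rw [hμ1]
        refine Finset.sum_congr rfl (fun t ht => ?_)
        rw [hν t ht, (hlcm t s (hlt t ht)).2.1]; ring
      rw [← Finset.mul_sum] at h1
      exact mul_left_cancel₀ (hc s) h1
    set newlam : Fin M → R := fun t => lam t + ν t * a t s with hnewlam
    have husv : u s ≤ v := (hTk s (Finset.mem_insert_self s T')).2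
    have hsupv : ∀ t ∈ T', u t ⊔ u s ≤ v :=
      fun t ht => sup_le (hTk t (Finset.mem_insert_of_mem ht)).2 husv
    have hW' := ih newlam (fun t ht => hTk t (Finset.mem_insert_of_mem ht)) (by
      have : ∑ t ∈ T', newlam t * c t
          = (∑ t ∈ T', lam t * c t) + c s * (∑ t ∈ T', ν t * b t s) := by
        rw [Finset.mul_sum, ← Finset.sum_add_distrib]
        refine Finset.sum_congr rfl (fun t ht => ?_)
        have h1 := (hlcm t s (hlt t ht)).1
        have h2 := (hlcm t s (hlt t ht)).2.1
        simp only [hnewlam]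
        linear_combination ν t * h2 - ν t * h1
      rw [this, ← hlams]
      linear_combination hsum)
    have hC : (∑ t ∈ T', (MvPolynomial.monomial (v - (u t ⊔ u s)) (ν t) :
          MvPolynomial (Fin n) R) • rr t s)
        ∈ Submodule.span (MvPolynomial (Fin n) R)
          {h | ∃ i j : Fin M, i < j ∧ kk i = kk j ∧ h = rr i j} := by
      refine Submodule.sum_mem _ (fun t ht => Submodule.smul_mem _ _ (Submodule.subset_span ?_))
      exact ⟨t, s, hlt t ht, ((hTk t (Finset.mem_insert_of_mem ht)).1.trans
        (hTk s (Finset.mem_insert_self s T')).1.symm), rfl⟩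
    have hWeq : (fun t => if t ∈ insert s T'
          then (MvPolynomial.monomial (v - u t) (lam t) : MvPolynomial (Fin n) R) else 0)
        = (fun t => if t ∈ T'
            then (MvPolynomial.monomial (v - u t) (newlam t) : MvPolynomial (Fin n) R)
            else 0)
          - ∑ t ∈ T', (MvPolynomial.monomial (v - (u t ⊔ u s)) (ν t) :
              MvPolynomial (Fin n) R) • rr t s := by
      funext q
      simp only [Pi.sub_apply, Finset.sum_apply, Pi.smul_apply, smul_eq_mul, hrr,
        Pi.single_apply]
      by_cases hqs : q = s
      · subst hqs
        rw [if_pos (Finset.mem_insert_self q T'), if_neg hs]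
        have : ∀ t ∈ T', (MvPolynomial.monomial (v - (u t ⊔ u q)) (ν t) :
              MvPolynomial (Fin n) R) *
            ((if q = t then MvPolynomial.monomial ((u t ⊔ u q) - u t) (a t q) else 0)
              - (if q = q then MvPolynomial.monomial ((u t ⊔ u q) - u q) (b t q) else 0))
            = - MvPolynomial.monomial (v - u q) (ν t * b t q) := by
          intro t ht
          rw [if_neg (show ¬ q = t from fun h => hs (by rw [h]; exact ht)), if_pos rfl,
            zero_sub, mul_neg, MvPolynomial.monomial_mul,
            tsub_add_tsub_cancel (hsupv t ht) le_sup_right]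
        rw [Finset.sum_congr rfl this, zero_sub, Finset.sum_neg_distrib, neg_neg,
          hlams, map_sum]
      · have hterm : ∀ t ∈ T', (MvPolynomial.monomial (v - (u t ⊔ u s)) (ν t) :
              MvPolynomial (Fin n) R) *
            ((if q = t then MvPolynomial.monomial ((u t ⊔ u s) - u t) (a t s) else 0)
              - (if q = s then MvPolynomial.monomial ((u t ⊔ u s) - u s) (b t s) else 0))
            = if q = t then MvPolynomial.monomial (v - u t) (ν t * a t s) else 0 := by
          intro t ht
          rw [if_neg hqs, sub_zero, mul_ite, mul_zero, MvPolynomial.monomial_mul,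
            tsub_add_tsub_cancel (hsupv t ht) le_sup_left]
        rw [Finset.sum_congr rfl hterm,
          Finset.sum_ite_eq T' q (fun t => (MvPolynomial.monomial (v - u t) (ν t * a t s) :
            MvPolynomial (Fin n) R))]
        by_cases hq : q ∈ T'
        · rw [if_pos hq, if_pos hq, if_pos (Finset.mem_insert_of_mem hq)]
          simp only [hnewlam]
          rw [← map_sub, add_sub_cancel_right]
        · rw [if_neg hq, if_neg hq,
            if_neg (fun h => (Finset.mem_insert.mp h).elim hqs hq), sub_zero]
    rw [hWeq]
    exact Submodule.sub_mem _ hW' hC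

end AuxForSyzygies

/-- over a PID, syzygies of terms `c_l x^{u_l} e_{k_l}` in `F = S^r`
are generated by the relations `r_{ij}`. -/
theorem syzygies_of_terms_PID
    {n : ℕ} {R : Type*} [CommRing R] [IsDomain R] [IsPrincipalIdealRing R]
    {r M : ℕ} (c : Fin M → R) (hc : ∀ i, c i ≠ 0)
    (u : Fin M → (Fin n →₀ ℕ)) (kk : Fin M → Fin r)
    (f : Fin M → (Fin r → MvPolynomial (Fin n) R))
    (hf : ∀ t, f t = Pi.single (kk t) (MvPolynomial.monomial (u t) (c t)))
    (l a b : Fin M → Fin M → R)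
    (hlcm : ∀ i j : Fin M, i < j → IsLcmChoice (c i) (c j) (l i j) (a i j) (b i j))
    (rr : Fin M → Fin M → (Fin M → MvPolynomial (Fin n) R))
    (hrr : ∀ i j : Fin M, rr i j =
      Pi.single i (MvPolynomial.monomial ((u i ⊔ u j) - u i) (a i j))
      - Pi.single j (MvPolynomial.monomial ((u i ⊔ u j) - u j) (b i j)))
    (w : Fin M → MvPolynomial (Fin n) R) :
    (∑ t, w t • f t = 0) ↔
      w ∈ Submodule.span (MvPolynomial (Fin n) R)
        {h | ∃ i j : Fin M, i < j ∧ kk i = kk j ∧ h = rr i j} := by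
  classical
  constructor
  · intro H
    have hcoeff : ∀ (k : Fin r) (v : Fin n →₀ ℕ),
        ∑ t ∈ Finset.univ.filter (fun t => kk t = k ∧ u t ≤ v),
          (MvPolynomial.coeff (v - u t) (w t)) * c t = 0 := by
      intro k v
      have h1 := congrFun H k
      rw [Finset.sum_apply] at h1
      have h2 : ∀ t : Fin M, (w t • f t) k
          = if kk t = k then w t * MvPolynomial.monomial (u t) (c t) else 0 := by
        intro t
        rw [hf t, Pi.smul_apply, Pi.single_apply, smul_ite, smul_zero, smul_eq_mul]
        by_cases hk : kk t = k
        · rw [if_pos hk, if_pos hk.symm]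
        · rw [if_neg hk, if_neg (fun h => hk h.symm)]
      rw [Finset.sum_congr rfl (fun t _ => h2 t)] at h1
      have h3 := congrArg (MvPolynomial.coeff v) h1
      rw [MvPolynomial.coeff_sum] at h3
      simp only [Pi.zero_apply, MvPolynomial.coeff_zero] at h3
      have h4 : ∀ t : Fin M, MvPolynomial.coeff v
            (if kk t = k then w t * MvPolynomial.monomial (u t) (c t) else 0)
          = if kk t = k ∧ u t ≤ v then MvPolynomial.coeff (v - u t) (w t) * c t else 0 := by
        intro t
        rw [apply_ite (MvPolynomial.coeff v), MvPolynomial.coeff_zero,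
          MvPolynomial.coeff_mul_monomial', ite_and]
      rw [Finset.sum_congr rfl (fun t _ => h4 t)] at h3
      rw [Finset.sum_filter]
      exact h3
    have hpiece : ∀ (k : Fin r) (v : Fin n →₀ ℕ),
        (fun t => if kk t = k ∧ u t ≤ v
          then (MvPolynomial.monomial (v - u t) (MvPolynomial.coeff (v - u t) (w t)) :
            MvPolynomial (Fin n) R)
          else 0) ∈ Submodule.span (MvPolynomial (Fin n) R)
            {h | ∃ i j : Fin M, i < j ∧ kk i = kk j ∧ h = rr i j} := by
      intro k v
      have hkey := key_syz c hc u kk l a b hlcm rr hrr v k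
        (Finset.univ.filter (fun t => kk t = k ∧ u t ≤ v))
        (fun t => MvPolynomial.coeff (v - u t) (w t))
        (fun t ht => (Finset.mem_filter.mp ht).2) (hcoeff k v)
      convert hkey using 1
      funext t
      by_cases h : kk t = k ∧ u t ≤ v
      · rw [if_pos h, if_pos (Finset.mem_filter.mpr ⟨Finset.mem_univ t, h⟩)]
      · rw [if_neg h, if_neg (show ¬ t ∈ Finset.univ.filter (fun t => kk t = k ∧ u t ≤ v)
          from fun hm => h (Finset.mem_filter.mp hm).2)]
    set V : Finset (Fin n →₀ ℕ) :=
      Finset.univ.biUnion (fun t => (w t).support.image (· + u t)) with hV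
    have hwt : ∀ t : Fin M, w t = ∑ v ∈ V, (if u t ≤ v
        then (MvPolynomial.monomial (v - u t) (MvPolynomial.coeff (v - u t) (w t)) :
          MvPolynomial (Fin n) R) else 0) := by
      intro t
      rw [← Finset.sum_filter]
      have himg : (w t).support ⊆ (V.filter (fun v => u t ≤ v)).image (· - u t) := by
        intro μ hμ
        refine Finset.mem_image.mpr ⟨μ + u t, Finset.mem_filter.mpr ⟨?_, le_add_self⟩,
          add_tsub_cancel_right μ (u t)⟩
        exact Finset.mem_biUnion.mpr ⟨t, Finset.mem_univ t, Finset.mem_image_of_mem _ hμ⟩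
      have hinj : ∀ v1 ∈ V.filter (fun v => u t ≤ v), ∀ v2 ∈ V.filter (fun v => u t ≤ v),
          v1 - u t = v2 - u t → v1 = v2 := by
        intro v1 h1 v2 h2 he
        have h1' := (Finset.mem_filter.mp h1).2
        have h2' := (Finset.mem_filter.mp h2).2
        rw [← tsub_add_cancel_of_le h1', ← tsub_add_cancel_of_le h2', he]
      have e1 : ∑ μ ∈ (V.filter (fun v => u t ≤ v)).image (· - u t),
          (MvPolynomial.monomial μ (MvPolynomial.coeff μ (w t)) : MvPolynomial (Fin n) R)
          = ∑ v ∈ V.filter (fun v => u t ≤ v),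
            (MvPolynomial.monomial (v - u t) (MvPolynomial.coeff (v - u t) (w t)) :
              MvPolynomial (Fin n) R) :=
        Finset.sum_image hinj
      have e2 : ∑ μ ∈ (w t).support,
          (MvPolynomial.monomial μ (MvPolynomial.coeff μ (w t)) : MvPolynomial (Fin n) R)
          = ∑ μ ∈ (V.filter (fun v => u t ≤ v)).image (· - u t),
            (MvPolynomial.monomial μ (MvPolynomial.coeff μ (w t)) : MvPolynomial (Fin n) R) :=
        Finset.sum_subset himg (fun x _ hx => by
          rw [MvPolynomial.notMem_support_iff.mp hx, map_zero])
      rw [← e1, ← e2]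
      exact (MvPolynomial.support_sum_monomial_coeff (w t)).symm
    have hdecomp : w = ∑ k : Fin r, ∑ v ∈ V, (fun t => if kk t = k ∧ u t ≤ v
        then (MvPolynomial.monomial (v - u t) (MvPolynomial.coeff (v - u t) (w t)) :
          MvPolynomial (Fin n) R) else 0) := by
      funext t
      simp only [Finset.sum_apply]
      have hk : ∀ k : Fin r, (∑ v ∈ V, if kk t = k ∧ u t ≤ v
          then (MvPolynomial.monomial (v - u t) (MvPolynomial.coeff (v - u t) (w t)) :
            MvPolynomial (Fin n) R) else 0) = if kk t = k then w t else 0 := by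
        intro k
        by_cases hkt : kk t = k
        · rw [if_pos hkt]
          rw [Finset.sum_congr rfl (fun v (_ : v ∈ V) => show
            (if kk t = k ∧ u t ≤ v
              then (MvPolynomial.monomial (v - u t) (MvPolynomial.coeff (v - u t) (w t)) :
                MvPolynomial (Fin n) R) else 0)
            = if u t ≤ v
              then (MvPolynomial.monomial (v - u t) (MvPolynomial.coeff (v - u t) (w t)) :
                MvPolynomial (Fin n) R) else 0 from by
            by_cases hle : u t ≤ v
            · rw [if_pos (And.intro hkt hle), if_pos hle]
            · rw [if_neg (fun hh => hle hh.2), if_neg hle])]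
          exact (hwt t).symm
        · rw [if_neg hkt]
          exact Finset.sum_eq_zero (fun v _ => if_neg (fun hh => hkt hh.1))
      rw [Finset.sum_congr rfl (fun k (_ : k ∈ Finset.univ) => hk k),
        Finset.sum_ite_eq Finset.univ (kk t) (fun _ => w t), if_pos (Finset.mem_univ (kk t))]
    rw [hdecomp]
    exact Submodule.sum_mem _ (fun k _ => Submodule.sum_mem _ (fun v _ => hpiece k v))
  · intro hw
    induction hw using Submodule.span_induction with
    | mem x hx =>
      obtain ⟨i, j, hij, hkij, rfl⟩ := hx
      rw [hrr i j]
      have hterm : ∀ t : Fin M, ((Pi.single i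
            (MvPolynomial.monomial ((u i ⊔ u j) - u i) (a i j))
          - Pi.single j (MvPolynomial.monomial ((u i ⊔ u j) - u j) (b i j)) :
            Fin M → MvPolynomial (Fin n) R) t) • f t
          = (if t = i then (MvPolynomial.monomial ((u i ⊔ u j) - u i) (a i j) :
              MvPolynomial (Fin n) R) • f t else 0)
            - (if t = j then (MvPolynomial.monomial ((u i ⊔ u j) - u j) (b i j) :
              MvPolynomial (Fin n) R) • f t else 0) := by
        intro t
        rw [Pi.sub_apply, sub_smul, Pi.single_apply, Pi.single_apply,
          ite_smul, zero_smul, ite_smul, zero_smul]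
      rw [Finset.sum_congr rfl (fun t _ => hterm t), Finset.sum_sub_distrib,
        Finset.sum_ite_eq' Finset.univ i, Finset.sum_ite_eq' Finset.univ j,
        if_pos (Finset.mem_univ i), if_pos (Finset.mem_univ j), hf i, hf j]
      rw [sub_eq_zero]
      funext q
      rw [Pi.smul_apply, Pi.smul_apply, Pi.single_apply, Pi.single_apply, ← hkij,
        smul_ite, smul_ite, smul_zero, smul_zero]
      by_cases hq : q = kk i
      · rw [if_pos hq, if_pos hq, smul_eq_mul, smul_eq_mul,
          MvPolynomial.monomial_mul, MvPolynomial.monomial_mul,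
          tsub_add_cancel_of_le (le_sup_left : u i ≤ u i ⊔ u j),
          tsub_add_cancel_of_le (le_sup_right : u j ≤ u i ⊔ u j)]
        congr 1
        linear_combination (hlcm i j hij).2.1 - (hlcm i j hij).1
      · rw [if_neg hq, if_neg hq]
    | zero => simp
    | add x y hx hy ihx ihy =>
      rw [Finset.sum_congr rfl (fun t (_ : t ∈ Finset.univ) =>
        by rw [Pi.add_apply, add_smul]), Finset.sum_add_distrib, ihx, ihy, add_zero]
    | smul q x hx ihx =>
      rw [Finset.sum_congr rfl (fun t (_ : t ∈ Finset.univ) =>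
        by rw [Pi.smul_apply, smul_eq_mul, mul_smul]), ← Finset.smul_sum, ihx, smul_zero]
end

section
/- Let R be a principal ideal domain and N ∈ R a nonzero non-unit with factorization N = p_1^{n_1}⋯p_k^{n_k} into pairwise non-associate irreducible elements. Then every element of R/NR can be written in the form (u·p_1^{α_1}⋯p_k^{α_k}) + NR where u + NR is a unit of R/NR and 0 ≤ α_i ≤ n_i for each i; moreover this representation is unique in the sense that if (u·p_1^{α_1}⋯p_k^{α_k}) + NR = (v·p_1^{β_1}⋯p_k^{β_k}) + NR with u + NR, v + NR units and 0 ≤ α_i, β_i ≤ n_i, then α_i = β_i for all i. -/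
open MvPolynomial
open scoped MonomialOrder

open PaperGB

/-- Unit in the quotient iff coprime to the generator. -/
theorem unit_mk_iff_coprime' {R : Type*} [CommRing R] (N u : R) :
    IsUnit (Ideal.Quotient.mk (Ideal.span {N}) u) ↔ IsCoprime u N := by
  constructor
  · intro h
    obtain ⟨b, hb⟩ := isUnit_iff_exists_inv.mp h
    obtain ⟨w, rfl⟩ := Ideal.Quotient.mk_surjective b
    have h0 : Ideal.Quotient.mk (Ideal.span {N}) (u * w - 1) = 0 := by
      rw [map_sub, map_mul, map_one, hb, sub_self]
    obtain ⟨z, hz⟩ := Ideal.mem_span_singleton.mp (Ideal.Quotient.eq_zero_iff_mem.mp h0)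
    exact ⟨w, -z, by linear_combination hz⟩
  · rintro ⟨a, b, h⟩
    refine isUnit_iff_exists_inv.mpr ⟨Ideal.Quotient.mk _ a, ?_⟩
    rw [← map_mul, ← map_one (Ideal.Quotient.mk (Ideal.span {N})), Ideal.Quotient.eq]
    exact Ideal.mem_span_singleton.mpr ⟨-b, by linear_combination h⟩

/-- Auxiliary uniqueness step. -/
theorem uniq_aux' {R : Type*} [CommRing R] [IsDomain R] [IsPrincipalIdealRing R]
    (N : R) {k : ℕ} (p : Fin k → R) (hirr : ∀ i, Irreducible (p i))
    (hassoc : ∀ i j, i ≠ j → ¬ Associated (p i) (p j))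
    (nn : Fin k → ℕ) (hfact : N = ∏ i, p i ^ nn i)
    (u v : R) (α β : Fin k → ℕ)
    (hu : IsCoprime u N)
    (hβn : ∀ i, β i ≤ nn i)
    (h : Ideal.Quotient.mk (Ideal.span {N}) (u * ∏ i, p i ^ α i) =
      Ideal.Quotient.mk (Ideal.span {N}) (v * ∏ i, p i ^ β i))
    (i : Fin k) (hlt : α i < β i) : False := by
  have hβi : β i ≤ nn i := hβn i
  have hprime : ∀ j, Prime (p j) := fun j => (hirr j).prime
  have hdvd : N ∣ u * ∏ j, p j ^ α j - v * ∏ j, p j ^ β j :=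
    Ideal.mem_span_singleton.mp ((Ideal.Quotient.eq).mp h)
  have h1 : p i ^ (α i + 1) ∣ N := by
    rw [hfact]
    exact dvd_trans (pow_dvd_pow _ (by omega : α i + 1 ≤ nn i))
      (Finset.dvd_prod_of_mem _ (Finset.mem_univ i))
  have h2 : p i ^ (α i + 1) ∣ v * ∏ j, p j ^ β j := by
    refine Dvd.dvd.mul_left ?_ v
    exact dvd_trans (pow_dvd_pow _ (by omega : α i + 1 ≤ β i))
      (Finset.dvd_prod_of_mem _ (Finset.mem_univ i))
  have h3 : p i ^ (α i + 1) ∣ u * ∏ j, p j ^ α j := by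
    have := dvd_add (h1.trans hdvd) h2
    rwa [sub_add_cancel] at this
  have hsplit : p i ^ α i * ∏ j ∈ Finset.univ.erase i, p j ^ α j = ∏ j, p j ^ α j :=
    Finset.mul_prod_erase Finset.univ (fun j => p j ^ α j) (Finset.mem_univ i)
  have h4 : p i ^ α i * p i ∣ p i ^ α i * (u * ∏ j ∈ Finset.univ.erase i, p j ^ α j) := by
    rw [← pow_succ]
    calc p i ^ (α i + 1) ∣ u * ∏ j, p j ^ α j := h3
      _ = p i ^ α i * (u * ∏ j ∈ Finset.univ.erase i, p j ^ α j) := by rw [← hsplit]; ring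
  have h5 : p i ∣ u * ∏ j ∈ Finset.univ.erase i, p j ^ α j :=
    (mul_dvd_mul_iff_left (pow_ne_zero _ (hirr i).ne_zero)).mp h4
  rcases (hprime i).dvd_mul.mp h5 with h6 | h6
  · have hpN : p i ∣ N := (dvd_pow_self (p i) (Nat.succ_ne_zero _)).trans h1
    exact (hirr i).not_isUnit (hu.isUnit_of_dvd' h6 hpN)
  · obtain ⟨j, hj, hj2⟩ := ((hprime i).dvd_finset_prod_iff _).mp h6
    have hji : j ≠ i := (Finset.mem_erase.mp hj).1
    exact hassoc i j hji.symm
      ((hirr i).associated_of_dvd (hirr j) ((hprime i).dvd_of_dvd_pow hj2))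
/-- canonical representatives in the quotient of a PID. Every element of
`R/NR` is of the form `u·p_1^{α_1}⋯p_k^{α_k} + NR` with `u + NR` a unit and `α_i ≤ n_i`,
and the exponents in such a representation are unique. -/
theorem quotient_PID_canonical_form
    {R : Type*} [CommRing R] [IsDomain R] [IsPrincipalIdealRing R]
    (N : R) (hN0 : N ≠ 0) (hNu : ¬ IsUnit N)
    {k : ℕ} (p : Fin k → R) (hirr : ∀ i, Irreducible (p i))
    (hassoc : ∀ i j, i ≠ j → ¬ Associated (p i) (p j))
    (nn : Fin k → ℕ) (hfact : N = ∏ i, p i ^ nn i) :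
    (∀ x : R ⧸ Ideal.span {N}, ∃ (u : R) (α : Fin k → ℕ),
      IsUnit (Ideal.Quotient.mk (Ideal.span {N}) u) ∧ (∀ i, α i ≤ nn i) ∧
      x = Ideal.Quotient.mk (Ideal.span {N}) (u * ∏ i, p i ^ α i)) ∧
    (∀ (u v : R) (α β : Fin k → ℕ),
      IsUnit (Ideal.Quotient.mk (Ideal.span {N}) u) →
      IsUnit (Ideal.Quotient.mk (Ideal.span {N}) v) →
      (∀ i, α i ≤ nn i) → (∀ i, β i ≤ nn i) →
      Ideal.Quotient.mk (Ideal.span {N}) (u * ∏ i, p i ^ α i) =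
        Ideal.Quotient.mk (Ideal.span {N}) (v * ∏ i, p i ^ β i) →
      α = β) := by
  classical
  have hprime : ∀ j, Prime (p j) := fun j => (hirr j).prime
  have hndvd : ∀ i j, i ≠ j → ¬ p i ∣ p j := fun i j hij hd =>
    hassoc i j hij ((hirr i).associated_of_dvd (hirr j) hd)
  have hndvdpow : ∀ i j, i ≠ j → ∀ m : ℕ, ¬ p i ∣ p j ^ m := fun i j hij m hd =>
    hndvd i j hij ((hprime i).dvd_of_dvd_pow hd)
  constructor
  · intro x
    obtain ⟨y, rfl⟩ := Ideal.Quotient.mk_surjective x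
    by_cases hNy : N ∣ y
    · refine ⟨1, nn, by simp, fun i => le_refl _, ?_⟩
      rw [one_mul, ← hfact, Ideal.Quotient.eq]
      exact Ideal.mem_span_singleton.mpr (dvd_sub hNy dvd_rfl)
    · have hy0 : y ≠ 0 := fun h => hNy (h ▸ dvd_zero N)
      set v : Fin k → ℕ := fun i => multiplicity (p i) y with hv
      have hfin : ∀ i, FiniteMultiplicity (p i) y := fun i =>
        FiniteMultiplicity.of_not_isUnit (hirr i).not_isUnit hy0
      have hvd : ∀ i, p i ^ v i ∣ y := fun i => pow_multiplicity_dvd _ _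
      have hnd : ∀ i, ¬ p i ^ (v i + 1) ∣ y := fun i =>
        (hfin i).not_pow_dvd_of_multiplicity_lt (lt_add_one _)
      have hcop : Pairwise (Function.onFun IsCoprime fun i => p i ^ v i) := fun i j hij =>
        (((hirr i).coprime_iff_not_dvd).mpr (hndvd i j hij)).pow
      obtain ⟨w, hw⟩ : ∃ w, y = (∏ i, p i ^ v i) * w :=
        Fintype.prod_dvd_of_coprime hcop hvd
      have hwnd : ∀ i, ¬ p i ∣ w := by
        intro i hdw
        apply hnd i
        rw [hw, pow_succ]
        exact mul_dvd_mul (Finset.dvd_prod_of_mem _ (Finset.mem_univ i)) hdw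
      set α : Fin k → ℕ := fun i => min (v i) (nn i) with hα
      set c : R := w * ∏ i, p i ^ (v i - α i) with hc
      set M : R := ∏ i, p i ^ (nn i - α i) with hM
      set T : Finset (Fin k) := Finset.univ.filter (fun i => ¬ p i ∣ c) with hT
      set u : R := c + M * ∏ i ∈ T, p i with hu
      have hdvd_c : ∀ i, α i < nn i → ¬ p i ∣ c := by
        intro i hi hdc
        have hvi : α i = v i := by simp only [hα] at hi ⊢; omega
        rcases (hprime i).dvd_mul.mp hdc with h1 | h1
        · exact hwnd i h1
        · obtain ⟨j, _, hj⟩ := ((hprime i).dvd_finset_prod_iff _).mp h1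
          by_cases hij : i = j
          · subst hij
            have : v i - α i = 0 := by omega
            rw [this, pow_zero] at hj
            exact (hirr i).not_isUnit (isUnit_of_dvd_one hj)
          · exact hndvdpow i j hij _ hj
      have hcu : ∀ i, ¬ p i ∣ u := by
        intro i
        by_cases hin : α i < nn i
        · intro hd
          have h2 : p i ∣ M := dvd_trans
            (dvd_pow_self (p i) (by omega : nn i - α i ≠ 0))
            (Finset.dvd_prod_of_mem _ (Finset.mem_univ i))
          refine hdvd_c i hin ?_
          have := dvd_sub hd (h2.mul_right (∏ j ∈ T, p j))
          simpa [hu] using this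
        · have hii : nn i - α i = 0 := by simp only [hα] at hin ⊢; omega
          have hMnd : ¬ p i ∣ M := by
            intro hd
            obtain ⟨j, _, hj⟩ := ((hprime i).dvd_finset_prod_iff _).mp hd
            by_cases hij : i = j
            · subst hij
              rw [hii, pow_zero] at hj
              exact (hirr i).not_isUnit (isUnit_of_dvd_one hj)
            · exact hndvdpow i j hij _ hj
          by_cases hdc : p i ∣ c
          · have hTnd : ¬ p i ∣ ∏ j ∈ T, p j := by
              intro hd
              obtain ⟨j, hjT, hj⟩ := ((hprime i).dvd_finset_prod_iff _).mp hd
              by_cases hij : i = j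
              · subst hij
                exact (Finset.mem_filter.mp hjT).2 hdc
              · exact hndvd i j hij hj
            intro hd
            have h7 : p i ∣ M * ∏ j ∈ T, p j := by
              have := dvd_sub hd hdc
              simpa [hu] using this
            rcases (hprime i).dvd_mul.mp h7 with h8 | h8
            exacts [hMnd h8, hTnd h8]
          · have hiT : i ∈ T := Finset.mem_filter.mpr ⟨Finset.mem_univ i, hdc⟩
            intro hd
            refine hdc ?_
            have := dvd_sub hd ((Finset.dvd_prod_of_mem _ hiT).mul_left M)
            simpa [hu] using this
      have hcoprime : IsCoprime u N := by
        rw [hfact]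
        refine IsCoprime.prod_right fun i _ => ?_
        exact (((hirr i).coprime_iff_not_dvd).mpr (hcu i)).symm.pow_right
      refine ⟨u, α, (unit_mk_iff_coprime' N u).mpr hcoprime,
        fun i => min_le_right _ _, ?_⟩
      have hsplit2 : (∏ i, p i ^ (v i - α i)) * ∏ i, p i ^ α i = ∏ i, p i ^ v i := by
        rw [← Finset.prod_mul_distrib]
        refine Finset.prod_congr rfl fun i _ => ?_
        rw [← pow_add]
        congr 1
        simp only [hα]; omega
      have hyc : y = c * ∏ i, p i ^ α i := by
        rw [hw, hc]
        linear_combination (-w) * hsplit2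
      have hMN : M * ∏ i, p i ^ α i = N := by
        rw [hfact, hM, ← Finset.prod_mul_distrib]
        refine Finset.prod_congr rfl fun i _ => ?_
        rw [← pow_add]
        congr 1
        simp only [hα]; omega
      rw [Ideal.Quotient.eq]
      refine Ideal.mem_span_singleton.mpr ⟨-(∏ j ∈ T, p j), ?_⟩
      rw [hyc, hu]
      linear_combination (-(∏ j ∈ T, p j)) * hMN
  · intro u v α β hu hv hαn hβn h
    funext i
    by_contra hne
    rcases lt_or_gt_of_ne hne with hlt | hlt
    · exact uniq_aux' N p hirr hassoc nn hfact u v α β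
        ((unit_mk_iff_coprime' N u).mp hu) hβn h i hlt
    · exact uniq_aux' N p hirr hassoc nn hfact v u β α
        ((unit_mk_iff_coprime' N v).mp hv) hαn h.symm i hlt
end

section
/- Let R be a principal ideal domain, N = p_1^{n_1}⋯p_k^{n_k} ∈ R a nonzero non-unit with pairwise non-associate irreducible factors p_i, R̄ = R/NR, S = R̄[x_1,…,x_n], and F = S^r with standard basis e_1,…,e_r. For l = 1,…,m let f_l = c_l·x^{u_l}·e_{k_l} with c_l ∈ R̄ nonzero, u_l ∈ ℕ^n, k_l ∈ {1,…,r}; write c_l = v_l·(d_l + NR) with v_l a unit of R̄ and d_l the canonical divisor of c_l. Let φ : S^m → F be the S-linear map sending the standard basis vector g_l to f_l. Then the kernel of φ is generated by the elements ((N/d_l) + NR)·g_l for 1 ≤ l ≤ m together with the elements r_{ij} = (lcm(d_i,d_j)/d_i + NR)·v_i^{−1}·x^{sup(u_i,u_j)−u_i}·g_i − (lcm(d_i,d_j)/d_j + NR)·v_j^{−1}·x^{sup(u_i,u_j)−u_j}·g_j for all 1 ≤ i < j ≤ m with k_i = k_j, where lcm(d_i,d_j) is the product of the p_t raised to the maxima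 of the exponents and sup(u_i,u_j) is the componentwise maximum in ℕ^n. -/
open MvPolynomial
open scoped MonomialOrder

open PaperGB

set_option linter.unusedSectionVars false
set_option maxHeartbeats 4000000
set_option synthInstance.maxHeartbeats 400000

namespace SyzAux

variable {R : Type*} [CommRing R] [IsDomain R] [IsPrincipalIdealRing R]
variable {k : ℕ}

def D (p : Fin k → R) (a : Fin k → ℕ) : R := ∏ t, p t ^ a t

variable {p : Fin k → R}

theorem D_mul (a b : Fin k → ℕ) : D p (a + b) = D p a * D p b := by
  simp [D, pow_add, Finset.prod_mul_distrib]

theorem D_ne_zero (hirr : ∀ i, Irreducible (p i)) (a : Fin k → ℕ) : D p a ≠ 0 :=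
  Finset.prod_ne_zero_iff.2 fun i _ => pow_ne_zero _ (hirr i).ne_zero

theorem D_sub_mul {a b : Fin k → ℕ} (h : b ≤ a) : D p (a - b) * D p b = D p a := by
  rw [← D_mul]; congr 1; funext i
  exact Nat.sub_add_cancel (h i)

theorem coprime_of_ne (hirr : ∀ i, Irreducible (p i))
    (hassoc : ∀ i j, i ≠ j → ¬ Associated (p i) (p j)) {i j : Fin k} (h : i ≠ j) :
    IsCoprime (p i) (p j) :=
  (Prime.coprime_iff_not_dvd (hirr i).prime).2 fun hd =>
    hassoc i j h (Irreducible.associated_of_dvd (hirr i) (hirr j) hd)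

variable (hirr : ∀ i, Irreducible (p i))
  (hassoc : ∀ i j, i ≠ j → ¬ Associated (p i) (p j))

include hirr hassoc

theorem factC {a b : Fin k → ℕ} {x : R} (h : D p b ∣ x * D p a) : D p (b - a) ∣ x := by
  apply Finset.prod_dvd_of_coprime (t := Finset.univ) (s := fun i => p i ^ (b i - a i))
  · intro i _ j _ hij
    exact ((coprime_of_ne hirr hassoc hij).pow : IsCoprime (p i ^ _) (p j ^ _))
  · intro i _
    rcases le_or_gt (b i) (a i) with hba | hab
    · simp [Nat.sub_eq_zero_of_le hba]
    · -- p i ^ b i ∣ x * D p a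
      have h1 : p i ^ b i ∣ x * D p a :=
        dvd_trans (Finset.dvd_prod_of_mem (fun t => p t ^ b t) (Finset.mem_univ i)) h
      have h2 : x * D p a = (x * p i ^ a i) * ∏ t ∈ Finset.univ.erase i, p t ^ a t := by
        rw [mul_assoc, Finset.mul_prod_erase Finset.univ (fun t => p t ^ a t) (Finset.mem_univ i)]
        rfl
      have hcop : IsCoprime (p i ^ b i) (∏ t ∈ Finset.univ.erase i, p t ^ a t) := by
        apply IsCoprime.pow_left
        apply IsCoprime.prod_right
        intro j hj
        exact (coprime_of_ne hirr hassoc (Finset.ne_of_mem_erase hj).symm).pow_right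
      have h3 : p i ^ b i ∣ x * p i ^ a i := hcop.dvd_of_dvd_mul_right (h2 ▸ h1)
      have h4 : p i ^ (b i - a i) * p i ^ a i ∣ x * p i ^ a i := by
        rwa [← pow_add, Nat.sub_add_cancel hab.le]
      exact (mul_dvd_mul_iff_right (pow_ne_zero _ (hirr i).ne_zero)).1 h4

theorem G2 (a b : Fin k → ℕ) : ∃ x y : R, x * D p a + y * D p b = D p (a ⊓ b) := by
  set m := a ⊓ b with hm
  have ha : m ≤ a := inf_le_left
  have hb : m ≤ b := inf_le_right
  have hcop : IsCoprime (D p (a - m)) (D p (b - m)) := by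
    apply IsCoprime.prod_left; intro i _
    apply IsCoprime.prod_right; intro j _
    rcases eq_or_ne i j with rfl | hij
    · rcases le_total (a i) (b i) with h | h
      · have h0 : (a - m) i = 0 := by
          simp only [Pi.sub_apply, hm, Pi.inf_apply]
          omega
        rw [h0, pow_zero]; exact isCoprime_one_left
      · have h0 : (b - m) i = 0 := by
          simp only [Pi.sub_apply, hm, Pi.inf_apply]
          omega
        rw [h0, pow_zero]; exact isCoprime_one_right
    · exact ((coprime_of_ne hirr hassoc hij).pow)
  obtain ⟨x, y, hxy⟩ := hcop
  refine ⟨x, y, ?_⟩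
  have := congrArg (· * D p m) hxy
  simp only [add_mul, one_mul, mul_assoc] at this
  rwa [D_sub_mul ha, D_sub_mul hb] at this


theorem Ginf {ι : Type*} [DecidableEq ι] (S : Finset ι) (hS : S.Nonempty) (α : ι → Fin k → ℕ) :
    ∃ g : Fin k → ℕ, (∀ t ∈ S, g ≤ α t) ∧
      ∀ s : Fin k → ℕ, ∃ lam : ι → R, D p (g - s) = ∑ t ∈ S, lam t * D p (α t - s) := by
  induction hS using Finset.Nonempty.cons_induction with
  | singleton a =>
    refine ⟨α a, fun t ht => by simp_all, fun s => ⟨fun _ => 1, by simp⟩⟩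
  | cons a S ha hS ih =>
    obtain ⟨g, hg1, hg2⟩ := ih
    refine ⟨α a ⊓ g, fun t ht => ?_, fun s => ?_⟩
    · rcases Finset.mem_cons.1 ht with rfl | ht
      · exact inf_le_left
      · exact le_trans inf_le_right (hg1 t ht)
    · obtain ⟨x, y, hxy⟩ := G2 hirr hassoc (α a - s) (g - s)
      obtain ⟨lam, hlam⟩ := hg2 s
      refine ⟨fun t => if t = a then x else y * lam t, ?_⟩
      have hmin : (α a ⊓ g) - s = (α a - s) ⊓ (g - s) := by
        funext i; simp only [Pi.sub_apply, Pi.inf_apply]; omega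
      rw [hmin, ← hxy, Finset.sum_cons]
      simp only [if_pos rfl]
      rw [hlam, Finset.mul_sum]
      congr 1
      apply Finset.sum_congr rfl
      intro t ht
      simp only [if_neg (show t ≠ a by rintro rfl; exact ha ht), mul_assoc]

theorem lemA {M : ℕ} (α : Fin M → Fin k → ℕ) (S : Finset (Fin M)) :
    ∀ b : Fin M → R, (∀ t ∉ S, b t = 0) → (∑ t, b t * D p (α t)) = 0 →
      ∃ μ : Fin M → Fin M → R, (∀ i j, μ i j ≠ 0 → i ∈ S ∧ j ∈ S ∧ i ≠ j) ∧
        ∀ t, b t = (∑ j, μ t j * D p ((α t ⊔ α j) - α t))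
          - ∑ i, μ i t * D p ((α i ⊔ α t) - α t) := by
  induction S using Finset.induction_on with
  | empty =>
    intro b hb hsum
    exact ⟨0, by simp, fun t => by simp [hb t (Finset.notMem_empty t)]⟩
  | @insert s S' hs ih =>
    intro b hb hsum
    have hsum' : ∑ t ∈ insert s S', b t * D p (α t) = 0 := by
      rw [Finset.sum_subset (Finset.subset_univ _)
        (fun t _ ht => by rw [hb t ht, zero_mul])]
      exact hsum
    rw [Finset.sum_insert hs] at hsum'
    rcases S'.eq_empty_or_nonempty with rfl | hS'
    · have hbs : b s = 0 := by
        simp only [Finset.sum_empty, add_zero] at hsum'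
        rcases mul_eq_zero.1 hsum' with h | h
        · exact h
        · exact absurd h (D_ne_zero hirr _)
      refine ⟨0, by simp, fun t => ?_⟩
      rcases eq_or_ne t s with rfl | hts
      · simp [hbs]
      · simp [hb t (by simp [hts])]
    · obtain ⟨g, hg1, hg2⟩ := Ginf hirr hassoc S' hS' α
      -- D p g divides b s * D p (α s)
      have hfac : ∑ t ∈ S', b t * D p (α t)
          = (∑ t ∈ S', b t * D p (α t - g)) * D p g := by
        rw [Finset.sum_mul]
        refine Finset.sum_congr rfl fun t ht => ?_
        rw [mul_assoc, D_sub_mul (hg1 t ht)]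
      have hdvd : D p g ∣ b s * D p (α s) := by
        refine ⟨-(∑ t ∈ S', b t * D p (α t - g)), ?_⟩
        have := eq_neg_of_add_eq_zero_left hsum'
        rw [this, hfac]; ring
      obtain ⟨β, hβ⟩ := factC hirr hassoc hdvd
      obtain ⟨lam, hlam⟩ := hg2 (α s)
      -- key exponent identity
      have key : ∀ t, D p ((α t ⊔ α s) - α t) * D p (α t)
          = D p (α t - α s) * D p (α s) := by
        intro t
        rw [D_sub_mul (le_sup_left : α t ≤ α t ⊔ α s)]
        have e1 : (α t ⊔ α s) - α s = α t - α s := by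
          funext i; simp only [Pi.sub_apply, Pi.sup_apply]; omega
        rw [← e1, D_sub_mul (le_sup_right : α s ≤ α t ⊔ α s)]
      set b' : Fin M → R := fun t => if t = s then 0
        else b t + (if t ∈ S' then β * lam t * D p ((α t ⊔ α s) - α t) else 0) with hb'
      have hb'supp : ∀ t ∉ S', b' t = 0 := by
        intro t ht
        rcases eq_or_ne t s with rfl | hts
        · simp [hb']
        · simp only [hb', if_neg hts, if_neg ht, add_zero]
          exact hb t (by simp [hts, ht])
      have hb'sum : ∑ t, b' t * D p (α t) = 0 := by
        rw [← Finset.sum_subset (Finset.subset_univ S')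
          (fun t _ ht => by rw [hb'supp t ht, zero_mul])]
        have expand : ∑ t ∈ S', b' t * D p (α t)
            = ∑ t ∈ S', b t * D p (α t)
              + β * ((∑ t ∈ S', lam t * D p (α t - α s)) * D p (α s)) := by
          rw [Finset.sum_mul, Finset.mul_sum, ← Finset.sum_add_distrib]
          refine Finset.sum_congr rfl fun t ht => ?_
          have hts : t ≠ s := by rintro rfl; exact hs ht
          simp only [hb', if_neg hts, if_pos ht]
          rw [add_mul, mul_assoc (β * lam t), key t]
          ring
        rw [expand, ← hlam]
        have : β * (D p (g - α s) * D p (α s)) = b s * D p (α s) := by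
          rw [hβ]; ring
        rw [this]
        linear_combination hsum'
      obtain ⟨μ', hμ'supp, hμ'eq⟩ := ih b' hb'supp hb'sum
      set μ₀ : Fin M → Fin M → R :=
        fun i j => if j = s ∧ i ∈ S' then -(β * lam i) else 0 with hμ₀
      refine ⟨fun i j => μ' i j + μ₀ i j, ?_, ?_⟩
      · intro i j hij
        have hij' : μ' i j + μ₀ i j ≠ 0 := hij
        rcases eq_or_ne (μ' i j) 0 with h0 | h0
        · rw [h0, zero_add] at hij'
          have : j = s ∧ i ∈ S' := by
            by_contra hcon; exact hij' (if_neg hcon)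
          obtain ⟨rfl, hiS⟩ := this
          exact ⟨Finset.mem_insert_of_mem hiS, Finset.mem_insert_self _ _,
            by rintro rfl; exact hs hiS⟩
        · obtain ⟨h1, h2, h3⟩ := hμ'supp i j h0
          exact ⟨Finset.mem_insert_of_mem h1, Finset.mem_insert_of_mem h2, h3⟩
      · intro t
        have hsum0 : ∀ t, (∑ j, μ₀ t j * D p ((α t ⊔ α j) - α t))
            = if t ∈ S' then -(β * lam t) * D p ((α t ⊔ α s) - α t) else 0 := by
          intro t
          rw [Finset.sum_eq_single s]
          · rcases Decidable.em (t ∈ S') with h | h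
            · simp [hμ₀, h]
            · simp [hμ₀, h]
          · intro j _ hjs
            rw [hμ₀]; simp [hjs]
          · simp
        have hsum1 : (∑ i, μ₀ i t * D p ((α i ⊔ α t) - α t))
            = if t = s then -(b s) else 0 := by
          rcases eq_or_ne t s with rfl | hts
          · rw [if_pos rfl]
            have : ∀ i : Fin M, μ₀ i t * D p ((α i ⊔ α t) - α t)
                = if i ∈ S' then -(β * (lam i * D p (α i - α t))) else 0 := by
              intro i
              rcases Decidable.em (i ∈ S') with h | h
              · have e1 : (α i ⊔ α t) - α t = α i - α t := by
                  funext x; simp only [Pi.sub_apply, Pi.sup_apply]; omega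
                simp [hμ₀, h, e1]; ring
              · simp [hμ₀, h]
            rw [Finset.sum_congr rfl fun i _ => this i]
            rw [Finset.sum_ite_mem, Finset.univ_inter, Finset.sum_neg_distrib,
              ← Finset.mul_sum, ← hlam, hβ]
            ring
          · rw [if_neg hts]
            apply Finset.sum_eq_zero
            intro i _
            have hcon : ¬ (t = s ∧ i ∈ S') := fun hc => hts hc.1
            simp only [hμ₀, if_neg hcon, zero_mul]
        have hexpand : (∑ j, (μ' t j + μ₀ t j) * D p ((α t ⊔ α j) - α t))
              - ∑ i, (μ' i t + μ₀ i t) * D p ((α i ⊔ α t) - α t)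
            = ((∑ j, μ' t j * D p ((α t ⊔ α j) - α t))
              - ∑ i, μ' i t * D p ((α i ⊔ α t) - α t))
              + ((∑ j, μ₀ t j * D p ((α t ⊔ α j) - α t))
              - ∑ i, μ₀ i t * D p ((α i ⊔ α t) - α t)) := by
          simp only [add_mul, Finset.sum_add_distrib]; ring
        rw [hexpand, ← hμ'eq t, hsum0, hsum1]
        rcases eq_or_ne t s with rfl | hts
        · simp only [hb', if_pos rfl, if_neg hs]
          simp
        · simp only [hb', if_neg hts, if_neg hts]
          rcases Decidable.em (t ∈ S') with h | h
          · simp only [if_pos h]; ring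
          · simp only [if_neg h]; ring

theorem lemA2 {N : R} {nn : Fin k → ℕ} (hfact : N = D p nn)
    {M : ℕ} {c : Fin M → R ⧸ Ideal.span {N}} {v : Fin M → (R ⧸ Ideal.span {N})ˣ}
    {α : Fin M → Fin k → ℕ} (hα : ∀ i t, α i t ≤ nn t)
    (hcv : ∀ i, c i = ↑(v i) * Ideal.Quotient.mk (Ideal.span {N}) (D p (α i)))
    (T : Finset (Fin M)) (a : Fin M → R ⧸ Ideal.span {N})
    (hsupp : ∀ t ∉ T, a t = 0) (hsum : ∑ t, a t * c t = 0) :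
    ∃ (lam : Fin M → R ⧸ Ideal.span {N}) (μ : Fin M → Fin M → R ⧸ Ideal.span {N}),
      (∀ i j, μ i j ≠ 0 → i ∈ T ∧ j ∈ T ∧ i ≠ j) ∧
      ∀ t, a t = lam t * Ideal.Quotient.mk (Ideal.span {N}) (D p (nn - α t))
        + ((∑ j, μ t j * (((v t)⁻¹ : (R ⧸ Ideal.span {N})ˣ)
              * Ideal.Quotient.mk (Ideal.span {N}) (D p ((α t ⊔ α j) - α t))))
          - ∑ i, μ i t * (((v t)⁻¹ : (R ⧸ Ideal.span {N})ˣ)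
              * Ideal.Quotient.mk (Ideal.span {N}) (D p ((α i ⊔ α t) - α t)))) := by
  classical
  rcases T.eq_empty_or_nonempty with rfl | ⟨t0, ht0⟩
  · exact ⟨0, 0, by simp, fun t => by
      simp [hsupp t (Finset.notMem_empty t)]⟩
  · have hbex : ∀ t, ∃ x : R, Ideal.Quotient.mk (Ideal.span {N}) x = a t * v t :=
      fun t => Ideal.Quotient.mk_surjective _
    choose btil0 hbtil0 using hbex
    set btil : Fin M → R := fun t => if t ∈ T then btil0 t else 0 with hbtil
    have hmkbtil : ∀ t, Ideal.Quotient.mk (Ideal.span {N}) (btil t) = a t * v t := by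
      intro t
      rcases Decidable.em (t ∈ T) with h | h
      · simp only [hbtil, if_pos h, hbtil0]
      · simp only [hbtil, if_neg h, map_zero, hsupp t h, zero_mul]
    have hmem : ∑ t, btil t * D p (α t) ∈ Ideal.span {N} := by
      rw [← Ideal.Quotient.eq_zero_iff_mem, map_sum, ← hsum]
      refine Finset.sum_congr rfl fun t _ => ?_
      rw [map_mul, hmkbtil, hcv t]
      ring
    obtain ⟨z, hz⟩ := Ideal.mem_span_singleton.1 hmem
    set b2 : Fin M → R := fun t =>
      if t = t0 then btil t0 - z * D p (nn - α t0) else btil t with hb2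
    have hb2supp : ∀ t ∉ T, b2 t = 0 := by
      intro t ht
      have hne : t ≠ t0 := by rintro rfl; exact ht ht0
      simp only [hb2, if_neg hne, hbtil, if_neg ht]
    have hNt0 : D p (nn - α t0) * D p (α t0) = N := by
      rw [D_sub_mul (fun i => hα t0 i), hfact]
    have hb2sum : ∑ t, b2 t * D p (α t) = 0 := by
      have step : ∀ t, b2 t * D p (α t)
          = btil t * D p (α t) - (if t = t0 then z * N else 0) := by
        intro t
        rcases eq_or_ne t t0 with rfl | hne
        · simp only [hb2, if_pos rfl, eq_self_iff_true, if_true, ← hNt0]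
          ring
        · simp only [hb2, if_neg hne, sub_zero]
      rw [Finset.sum_congr rfl fun t _ => step t, Finset.sum_sub_distrib,
        Finset.sum_ite_eq' Finset.univ t0 (fun _ => z * N), if_pos (Finset.mem_univ t0), hz]
      ring
    obtain ⟨μ', hμ'supp, hμ'eq⟩ := lemA hirr hassoc α T b2 hb2supp hb2sum
    refine ⟨fun t => if t = t0
        then (((v t0)⁻¹ : (R ⧸ Ideal.span {N})ˣ) : R ⧸ Ideal.span {N})
          * Ideal.Quotient.mk (Ideal.span {N}) z else 0,
      fun i j => Ideal.Quotient.mk (Ideal.span {N}) (μ' i j),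
      fun i j hij => hμ'supp i j fun h0 => by simp [h0] at hij, ?_⟩
    intro t
    have hat : a t = Ideal.Quotient.mk (Ideal.span {N}) (btil t)
        * (((v t)⁻¹ : (R ⧸ Ideal.span {N})ˣ) : R ⧸ Ideal.span {N}) := by
      rw [hmkbtil]
      rw [mul_assoc, ← Units.val_mul, mul_inv_cancel, Units.val_one, mul_one]
    have hbt : Ideal.Quotient.mk (Ideal.span {N}) (btil t)
        = Ideal.Quotient.mk (Ideal.span {N}) (b2 t)
          + (if t = t0 then Ideal.Quotient.mk (Ideal.span {N}) z
              * Ideal.Quotient.mk (Ideal.span {N}) (D p (nn - α t0)) else 0) := by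
      rcases eq_or_ne t t0 with rfl | hne
      · simp only [hb2, if_pos rfl, eq_self_iff_true, if_true, map_sub, map_mul]
        ring
      · simp only [hb2, if_neg hne, add_zero]
    have hmkb2 : Ideal.Quotient.mk (Ideal.span {N}) (b2 t)
        = (∑ j, Ideal.Quotient.mk (Ideal.span {N}) (μ' t j)
            * Ideal.Quotient.mk (Ideal.span {N}) (D p ((α t ⊔ α j) - α t)))
          - ∑ i, Ideal.Quotient.mk (Ideal.span {N}) (μ' i t)
            * Ideal.Quotient.mk (Ideal.span {N}) (D p ((α i ⊔ α t) - α t)) := by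
      rw [hμ'eq t, map_sub, map_sum, map_sum]
      simp only [map_mul]
    rw [hat, hbt, hmkb2]
    rcases eq_or_ne t t0 with rfl | hne
    · simp only [eq_self_iff_true, if_true]
      rw [add_mul, sub_mul, Finset.sum_mul, Finset.sum_mul]
      have e1 : ∀ (β : Fin M → R) (γ : Fin M → Fin k → ℕ),
          ∑ j, (Ideal.Quotient.mk (Ideal.span {N}) (β j)
              * Ideal.Quotient.mk (Ideal.span {N}) (D p (γ j)))
              * (((v t)⁻¹ : (R ⧸ Ideal.span {N})ˣ) : R ⧸ Ideal.span {N})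
          = ∑ j, Ideal.Quotient.mk (Ideal.span {N}) (β j)
              * ((((v t)⁻¹ : (R ⧸ Ideal.span {N})ˣ) : R ⧸ Ideal.span {N})
                * Ideal.Quotient.mk (Ideal.span {N}) (D p (γ j))) :=
        fun β γ => Finset.sum_congr rfl fun j _ => by ring
      rw [e1 (fun j => μ' t j) (fun j => (α t ⊔ α j) - α t),
        e1 (fun i => μ' i t) (fun i => (α i ⊔ α t) - α t)]
      ring
    · simp only [if_neg hne, add_zero, zero_mul, zero_add]
      rw [sub_mul, Finset.sum_mul, Finset.sum_mul]
      congr 1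
      all_goals {refine Finset.sum_congr rfl fun j _ => by ring}
end SyzAux

/-- over `R̄ = R/NR`, syzygies of terms `c_l x^{u_l} e_{k_l}` in `F = S^r`
are generated by the annihilator relations and the relations `r_{ij}`. -/
theorem syzygies_of_terms_quotient_PID
    {n : ℕ} {R : Type*} [CommRing R] [IsDomain R] [IsPrincipalIdealRing R]
    (N : R) (hN0 : N ≠ 0) (hNu : ¬ IsUnit N)
    {k : ℕ} (p : Fin k → R) (hirr : ∀ i, Irreducible (p i))
    (hassoc : ∀ i j, i ≠ j → ¬ Associated (p i) (p j))
    (nn : Fin k → ℕ) (hfact : N = ∏ i, p i ^ nn i)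
    {r M : ℕ} (c : Fin M → (R ⧸ Ideal.span {N})) (hc : ∀ i, c i ≠ 0)
    (v : Fin M → (R ⧸ Ideal.span {N})ˣ) (α : Fin M → Fin k → ℕ)
    (hα : ∀ i t, α i t ≤ nn t)
    (hcv : ∀ i, c i = ↑(v i) * Ideal.Quotient.mk (Ideal.span {N}) (∏ t, p t ^ α i t))
    (u : Fin M → (Fin n →₀ ℕ)) (kk : Fin M → Fin r)
    (f : Fin M → (Fin r → MvPolynomial (Fin n) (R ⧸ Ideal.span {N})))
    (hf : ∀ t, f t = Pi.single (kk t) (MvPolynomial.monomial (u t) (c t)))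
    (rr : Fin M → Fin M → (Fin M → MvPolynomial (Fin n) (R ⧸ Ideal.span {N})))
    (hrr : ∀ i j : Fin M, rr i j =
      Pi.single i (MvPolynomial.monomial ((u i ⊔ u j) - u i)
        (↑(v i)⁻¹ * Ideal.Quotient.mk (Ideal.span {N})
          (∏ t, p t ^ (max (α i t) (α j t) - α i t))))
      - Pi.single j (MvPolynomial.monomial ((u i ⊔ u j) - u j)
        (↑(v j)⁻¹ * Ideal.Quotient.mk (Ideal.span {N})
          (∏ t, p t ^ (max (α i t) (α j t) - α j t)))))
    (w : Fin M → MvPolynomial (Fin n) (R ⧸ Ideal.span {N})) :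
    (∑ t, w t • f t = 0) ↔
      w ∈ Submodule.span (MvPolynomial (Fin n) (R ⧸ Ideal.span {N}))
        ({h | ∃ t : Fin M, h = Pi.single t
            (MvPolynomial.C (Ideal.Quotient.mk (Ideal.span {N})
              (∏ s, p s ^ (nn s - α t s))))} ∪
         {h | ∃ i j : Fin M, i < j ∧ kk i = kk j ∧ h = rr i j}) := by
  classical
  have hfactD : N = SyzAux.D p nn := hfact
  have hcvD : ∀ i, c i = ↑(v i) * Ideal.Quotient.mk (Ideal.span {N}) (SyzAux.D p (α i)) := hcv
  have hprod : ∀ i j : Fin M,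
      (∏ t, p t ^ (max (α i t) (α j t) - α i t)) = SyzAux.D p ((α i ⊔ α j) - α i) := by
    intro i j
    exact Finset.prod_congr rfl fun t _ => rfl
  have hprodA : ∀ t : Fin M, (∏ s, p s ^ (nn s - α t s)) = SyzAux.D p (nn - α t) :=
    fun t => Finset.prod_congr rfl fun s _ => rfl
  have hNzero : Ideal.Quotient.mk (Ideal.span {N}) N = 0 :=
    Ideal.Quotient.eq_zero_iff_mem.2 (Ideal.mem_span_singleton_self N)
  have hcoeff : ∀ (i : Fin M) (e : Fin k → ℕ), α i ≤ e →
      (↑(v i)⁻¹ * Ideal.Quotient.mk (Ideal.span {N}) (SyzAux.D p (e - α i))) * c i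
        = Ideal.Quotient.mk (Ideal.span {N}) (SyzAux.D p e) := by
    intro i e he
    rw [hcvD i]
    have h1 : (↑(v i)⁻¹ * Ideal.Quotient.mk (Ideal.span {N}) (SyzAux.D p (e - α i)))
        * (↑(v i) * Ideal.Quotient.mk (Ideal.span {N}) (SyzAux.D p (α i)))
        = (↑(v i)⁻¹ * ↑(v i))
          * (Ideal.Quotient.mk (Ideal.span {N}) (SyzAux.D p (e - α i))
            * Ideal.Quotient.mk (Ideal.span {N}) (SyzAux.D p (α i))) := by ring
    rw [h1, Units.inv_mul, one_mul, ← map_mul, SyzAux.D_sub_mul he]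
  have hcoeffann : ∀ t : Fin M,
      Ideal.Quotient.mk (Ideal.span {N}) (SyzAux.D p (nn - α t)) * c t = 0 := by
    intro t
    rw [hcvD t]
    have h1 : Ideal.Quotient.mk (Ideal.span {N}) (SyzAux.D p (nn - α t))
        * (↑(v t) * Ideal.Quotient.mk (Ideal.span {N}) (SyzAux.D p (α t)))
        = ↑(v t) * (Ideal.Quotient.mk (Ideal.span {N}) (SyzAux.D p (nn - α t))
            * Ideal.Quotient.mk (Ideal.span {N}) (SyzAux.D p (α t))) := by ring
    rw [h1, ← map_mul, SyzAux.D_sub_mul (fun s => hα t s), ← hfactD, hNzero, mul_zero]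
  have hsmul_single : ∀ (P : MvPolynomial (Fin n) (R ⧸ Ideal.span {N})) (a : Fin r)
      (m : MvPolynomial (Fin n) (R ⧸ Ideal.span {N})),
      P • (Pi.single a m : Fin r → MvPolynomial (Fin n) (R ⧸ Ideal.span {N}))
        = Pi.single a (P * m) := by
    intro P a m
    funext q
    rcases eq_or_ne q a with rfl | hq
    · simp [Pi.single_eq_same]
    · simp [Pi.single_eq_of_ne hq]
  have hsingle_sum : ∀ (t0 : Fin M) (P : MvPolynomial (Fin n) (R ⧸ Ideal.span {N})),
      ∑ t, (Pi.single t0 P : Fin M → MvPolynomial (Fin n) (R ⧸ Ideal.span {N})) t • f t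
        = P • f t0 := by
    intro t0 P
    rw [Finset.sum_eq_single t0]
    · rw [Pi.single_eq_same]
    · intro b _ hb
      rw [Pi.single_eq_of_ne hb, zero_smul]
    · intro h
      exact absurd (Finset.mem_univ t0) h
  have hpair : ∀ (i j : Fin M) (X Y : MvPolynomial (Fin n) (R ⧸ Ideal.span {N})),
      ∑ t, (Pi.single i X - Pi.single j Y
          : Fin M → MvPolynomial (Fin n) (R ⧸ Ideal.span {N})) t • f t
        = X • f i - Y • f j := by
    intro i j X Y
    simp only [Pi.sub_apply, sub_smul, Finset.sum_sub_distrib]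
    rw [← hsingle_sum i X, ← hsingle_sum j Y, ← Finset.sum_sub_distrib]
    exact Finset.sum_congr rfl fun t _ => by
      funext q; simp only [Pi.smul_apply, Pi.sub_apply, smul_eq_mul, sub_mul]
  constructor
  · intro hw
    set A : (Fin n →₀ ℕ) → Fin r → Fin M → (R ⧸ Ideal.span {N}) :=
      fun γ q t => if kk t = q ∧ u t ≤ γ then MvPolynomial.coeff (γ - u t) (w t) else 0
      with hA
    have hkey : ∀ (γ : Fin n →₀ ℕ) (q : Fin r), ∑ t, A γ q t * c t = 0 := by
      intro γ q
      have h0 : (∑ t, w t • f t) q = 0 := by rw [hw]; rfl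
      rw [Finset.sum_apply] at h0
      have h1 : ∀ t, (w t • f t) q
          = w t * (if q = kk t then MvPolynomial.monomial (u t) (c t) else 0) := by
        intro t
        rw [Pi.smul_apply, hf t, smul_eq_mul, Pi.single_apply]
      rw [Finset.sum_congr rfl fun t _ => h1 t] at h0
      have h2 := congrArg (MvPolynomial.coeff γ) h0
      rw [MvPolynomial.coeff_sum, MvPolynomial.coeff_zero] at h2
      rw [← h2]
      refine Finset.sum_congr rfl fun t _ => ?_
      rcases eq_or_ne (kk t) q with hq | hq
      · rw [if_pos hq.symm, MvPolynomial.coeff_mul_monomial']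
        rcases Decidable.em (u t ≤ γ) with h | h
        · rw [if_pos h]
          simp only [hA]
          rw [if_pos (show kk t = q ∧ u t ≤ γ from ⟨hq, h⟩)]
        · rw [if_neg h]
          simp only [hA]
          rw [if_neg (show ¬(kk t = q ∧ u t ≤ γ) from fun hcon => h hcon.2), zero_mul]
      · rw [if_neg (fun hh => hq hh.symm), mul_zero, MvPolynomial.coeff_zero]
        simp only [hA]
        rw [if_neg (show ¬(kk t = q ∧ u t ≤ γ) from fun hcon => hq hcon.1), zero_mul]
    have hall : ∀ (γ : Fin n →₀ ℕ) (q : Fin r),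
        ∃ (lam : Fin M → R ⧸ Ideal.span {N}) (μ : Fin M → Fin M → R ⧸ Ideal.span {N}),
          (∀ i j, μ i j ≠ 0 →
            i ∈ Finset.univ.filter (fun t => kk t = q ∧ u t ≤ γ) ∧
            j ∈ Finset.univ.filter (fun t => kk t = q ∧ u t ≤ γ) ∧ i ≠ j) ∧
          ∀ t, A γ q t = lam t * Ideal.Quotient.mk (Ideal.span {N}) (SyzAux.D p (nn - α t))
            + ((∑ j, μ t j * (((v t)⁻¹ : (R ⧸ Ideal.span {N})ˣ)
                  * Ideal.Quotient.mk (Ideal.span {N}) (SyzAux.D p ((α t ⊔ α j) - α t))))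
              - ∑ i, μ i t * (((v t)⁻¹ : (R ⧸ Ideal.span {N})ˣ)
                  * Ideal.Quotient.mk (Ideal.span {N}) (SyzAux.D p ((α i ⊔ α t) - α t)))) := by
      intro γ q
      refine SyzAux.lemA2 hirr hassoc hfactD hα hcvD
        (Finset.univ.filter (fun t => kk t = q ∧ u t ≤ γ)) (A γ q) ?_ (hkey γ q)
      intro t ht
      simp only [hA]
      exact if_neg fun hcon => ht (Finset.mem_filter.2 ⟨Finset.mem_univ t, hcon⟩)
    set Γ : Finset (Fin n →₀ ℕ) :=
      Finset.univ.biUnion (fun t : Fin M => (w t).support.image (· + u t)) with hΓ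
    have hqlem : ∀ (γ : Fin n →₀ ℕ) (t : Fin M),
        ∑ q, MvPolynomial.monomial (γ - u t) (A γ q t)
          = MvPolynomial.monomial (γ - u t)
              (if u t ≤ γ then MvPolynomial.coeff (γ - u t) (w t) else 0) := by
      intro γ t
      rw [← map_sum (MvPolynomial.monomial (γ - u t))]
      congr 1
      rw [Finset.sum_eq_single (kk t)]
      · simp only [hA]
        rcases Decidable.em (u t ≤ γ) with h | h
        · simp [h]
        · simp [h]
      · intro q _ hqne
        simp only [hA]
        exact if_neg fun hcon => hqne hcon.1.symm
      · intro h
        exact absurd (Finset.mem_univ (kk t)) h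
    have hdecomp : ∀ t, w t = ∑ γ ∈ Γ, MvPolynomial.monomial (γ - u t)
        (if u t ≤ γ then MvPolynomial.coeff (γ - u t) (w t) else 0) := by
      intro t
      have hsub : (w t).support.image (· + u t) ⊆ Γ :=
        Finset.subset_biUnion_of_mem (fun t : Fin M => (w t).support.image (· + u t))
          (Finset.mem_univ t)
      rw [← Finset.sum_subset hsub ?vanish]
      case vanish =>
        intro γ _ hγ
        rcases Decidable.em (u t ≤ γ) with h | h
        · rw [if_pos h]
          have hc0 : MvPolynomial.coeff (γ - u t) (w t) = 0 := by
            by_contra hc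
            exact hγ (Finset.mem_image.2 ⟨γ - u t, MvPolynomial.mem_support_iff.2 hc,
              tsub_add_cancel_of_le h⟩)
          rw [hc0, map_zero]
        · rw [if_neg h, map_zero]
      rw [Finset.sum_image (fun x _ y _ hxy => by simpa using congrArg (· - u t) hxy)]
      have hterm : ∀ δ ∈ (w t).support,
          MvPolynomial.monomial (δ + u t - u t)
            (if u t ≤ δ + u t then MvPolynomial.coeff (δ + u t - u t) (w t) else 0)
          = MvPolynomial.monomial δ (MvPolynomial.coeff δ (w t)) := by
        intro δ _
        rw [add_tsub_cancel_right, if_pos (le_add_self : u t ≤ δ + u t)]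
      rw [Finset.sum_congr rfl hterm, MvPolynomial.support_sum_monomial_coeff]
    have hWfun : w = ∑ γ ∈ Γ, ∑ q : Fin r,
        (fun t => MvPolynomial.monomial (γ - u t) (A γ q t)) := by
      funext t
      rw [Finset.sum_apply]
      have hinner : ∀ γ ∈ Γ, (∑ q : Fin r,
          (fun t => MvPolynomial.monomial (γ - u t) (A γ q t))) t
          = MvPolynomial.monomial (γ - u t)
              (if u t ≤ γ then MvPolynomial.coeff (γ - u t) (w t) else 0) := by
        intro γ _
        rw [Finset.sum_apply]
        exact hqlem γ t
      rw [Finset.sum_congr rfl hinner, ← hdecomp t]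
    have hprodR : ∀ i j : Fin M,
        (∏ s, p s ^ (max (α i s) (α j s) - α j s)) = SyzAux.D p ((α i ⊔ α j) - α j) :=
      fun i j => Finset.prod_congr rfl fun s _ => rfl
    have hanti : ∀ i j : Fin M, rr i j = - rr j i := by
      intro i j
      rw [hrr i j, hrr j i]
      have h1 : u j ⊔ u i = u i ⊔ u j := sup_comm _ _
      have h2 : (∏ s, p s ^ (max (α j s) (α i s) - α i s))
          = ∏ s, p s ^ (max (α i s) (α j s) - α i s) :=
        Finset.prod_congr rfl fun s _ => by rw [max_comm (α j s) (α i s)]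
      have h3 : (∏ s, p s ^ (max (α j s) (α i s) - α j s))
          = ∏ s, p s ^ (max (α i s) (α j s) - α j s) :=
        Finset.prod_congr rfl fun s _ => by rw [max_comm (α j s) (α i s)]
      rw [h1, h2, h3, neg_sub]
    have hmempiece : ∀ (γ : Fin n →₀ ℕ) (q : Fin r),
        (fun t => MvPolynomial.monomial (γ - u t) (A γ q t))
          ∈ Submodule.span (MvPolynomial (Fin n) (R ⧸ Ideal.span {N}))
            ({h | ∃ t : Fin M, h = Pi.single t
                (MvPolynomial.C (Ideal.Quotient.mk (Ideal.span {N})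
                  (∏ s, p s ^ (nn s - α t s))))} ∪
             {h | ∃ i j : Fin M, i < j ∧ kk i = kk j ∧ h = rr i j}) := by
      intro γ q
      obtain ⟨lam, μ, hsupp, heq⟩ := hall γ q
      have hkey2 : (fun t => MvPolynomial.monomial (γ - u t) (A γ q t))
          = (∑ t, (MvPolynomial.monomial (γ - u t) (lam t))
              • (Pi.single t (MvPolynomial.C (Ideal.Quotient.mk (Ideal.span {N})
                  (∏ s, p s ^ (nn s - α t s))))
                : Fin M → MvPolynomial (Fin n) (R ⧸ Ideal.span {N})))
            + ∑ i, ∑ j, (MvPolynomial.monomial (γ - (u i ⊔ u j)) (μ i j)) • rr i j := by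
        funext t
        simp only [Pi.add_apply, Finset.sum_apply]
        have hfirst : ∑ t', ((MvPolynomial.monomial (γ - u t') (lam t'))
              • (Pi.single t' (MvPolynomial.C (Ideal.Quotient.mk (Ideal.span {N})
                  (∏ s, p s ^ (nn s - α t' s))))
                : Fin M → MvPolynomial (Fin n) (R ⧸ Ideal.span {N}))) t
            = MvPolynomial.monomial (γ - u t)
                (Ideal.Quotient.mk (Ideal.span {N}) (SyzAux.D p (nn - α t)) * lam t) := by
          rw [Finset.sum_eq_single t]
          · rw [Pi.smul_apply, Pi.single_eq_same, smul_eq_mul, mul_comm,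
              MvPolynomial.C_mul_monomial, hprodA t]
          · intro b _ hb
            rw [Pi.smul_apply, Pi.single_eq_of_ne (Ne.symm hb), smul_eq_mul, mul_zero]
          · intro h; exact absurd (Finset.mem_univ t) h
        have hXterm : ∀ j, MvPolynomial.monomial (γ - (u t ⊔ u j)) (μ t j)
              * MvPolynomial.monomial ((u t ⊔ u j) - u t)
                (((v t)⁻¹ : (R ⧸ Ideal.span {N})ˣ) * Ideal.Quotient.mk (Ideal.span {N})
                  (∏ s, p s ^ (max (α t s) (α j s) - α t s)))
            = MvPolynomial.monomial (γ - u t)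
                (μ t j * (((v t)⁻¹ : (R ⧸ Ideal.span {N})ˣ)
                  * Ideal.Quotient.mk (Ideal.span {N}) (SyzAux.D p ((α t ⊔ α j) - α t)))) := by
          intro j
          rw [MvPolynomial.monomial_mul, hprod t j]
          rcases eq_or_ne (μ t j) 0 with h0 | h0
          · rw [h0, zero_mul, map_zero, map_zero]
          · obtain ⟨hiT, hjT, _⟩ := hsupp t j h0
            have h1 : u t ≤ γ := (Finset.mem_filter.1 hiT).2.2
            have h2 : u j ≤ γ := (Finset.mem_filter.1 hjT).2.2
            rw [tsub_add_tsub_cancel (sup_le h1 h2) le_sup_left]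
        have hYterm : ∀ i, MvPolynomial.monomial (γ - (u i ⊔ u t)) (μ i t)
              * MvPolynomial.monomial ((u i ⊔ u t) - u t)
                (((v t)⁻¹ : (R ⧸ Ideal.span {N})ˣ) * Ideal.Quotient.mk (Ideal.span {N})
                  (∏ s, p s ^ (max (α i s) (α t s) - α t s)))
            = MvPolynomial.monomial (γ - u t)
                (μ i t * (((v t)⁻¹ : (R ⧸ Ideal.span {N})ˣ)
                  * Ideal.Quotient.mk (Ideal.span {N}) (SyzAux.D p ((α i ⊔ α t) - α t)))) := by
          intro i
          rw [MvPolynomial.monomial_mul, hprodR i t]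
          rcases eq_or_ne (μ i t) 0 with h0 | h0
          · rw [h0, zero_mul, map_zero, map_zero]
          · obtain ⟨hiT, hjT, _⟩ := hsupp i t h0
            have h1 : u i ≤ γ := (Finset.mem_filter.1 hiT).2.2
            have h2 : u t ≤ γ := (Finset.mem_filter.1 hjT).2.2
            rw [tsub_add_tsub_cancel (sup_le h1 h2) le_sup_right]
        have hsecond : ∑ i, (∑ j, ((MvPolynomial.monomial (γ - (u i ⊔ u j)) (μ i j)) • rr i j) t)
            = MvPolynomial.monomial (γ - u t)
                ((∑ j, μ t j * (((v t)⁻¹ : (R ⧸ Ideal.span {N})ˣ)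
                    * Ideal.Quotient.mk (Ideal.span {N}) (SyzAux.D p ((α t ⊔ α j) - α t))))
                  - ∑ i, μ i t * (((v t)⁻¹ : (R ⧸ Ideal.span {N})ˣ)
                    * Ideal.Quotient.mk (Ideal.span {N}) (SyzAux.D p ((α i ⊔ α t) - α t)))) := by
          have hterm : ∀ i j, ((MvPolynomial.monomial (γ - (u i ⊔ u j)) (μ i j)) • rr i j) t
              = (if i = t then MvPolynomial.monomial (γ - u t)
                    (μ t j * (((v t)⁻¹ : (R ⧸ Ideal.span {N})ˣ)
                      * Ideal.Quotient.mk (Ideal.span {N})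
                        (SyzAux.D p ((α t ⊔ α j) - α t)))) else 0)
                - (if j = t then MvPolynomial.monomial (γ - u t)
                    (μ i t * (((v t)⁻¹ : (R ⧸ Ideal.span {N})ˣ)
                      * Ideal.Quotient.mk (Ideal.span {N})
                        (SyzAux.D p ((α i ⊔ α t) - α t)))) else 0) := by
            intro i j
            rw [Pi.smul_apply, hrr i j, Pi.sub_apply, smul_sub]
            congr 1
            · rcases eq_or_ne i t with rfl | hit
              · rw [if_pos rfl, Pi.single_eq_same, smul_eq_mul, hXterm j]
              · rw [if_neg hit, Pi.single_eq_of_ne (Ne.symm hit), smul_zero]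
            · rcases eq_or_ne j t with rfl | hjt
              · rw [if_pos rfl, Pi.single_eq_same, smul_eq_mul, hYterm i]
              · rw [if_neg hjt, Pi.single_eq_of_ne (Ne.symm hjt), smul_zero]
          rw [Finset.sum_congr rfl fun i _ => Finset.sum_congr rfl fun j _ => hterm i j]
          rw [Finset.sum_congr rfl fun i _ => Finset.sum_sub_distrib _ _, Finset.sum_sub_distrib,
            map_sub (MvPolynomial.monomial (γ - u t))]
          congr 1
          · rw [Finset.sum_comm]
            rw [Finset.sum_congr rfl fun j (_ : j ∈ Finset.univ) =>
              Finset.sum_ite_eq' Finset.univ t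
                (fun i => MvPolynomial.monomial (γ - u t)
                  (μ t j * (((v t)⁻¹ : (R ⧸ Ideal.span {N})ˣ)
                    * Ideal.Quotient.mk (Ideal.span {N}) (SyzAux.D p ((α t ⊔ α j) - α t)))))]
            rw [Finset.sum_congr rfl fun j (_ : j ∈ Finset.univ) =>
              if_pos (Finset.mem_univ t)]
            rw [← map_sum (MvPolynomial.monomial (γ - u t))]
          · rw [Finset.sum_congr rfl fun i (_ : i ∈ Finset.univ) =>
              Finset.sum_ite_eq' Finset.univ t
                (fun j => MvPolynomial.monomial (γ - u t)
                  (μ i t * (((v t)⁻¹ : (R ⧸ Ideal.span {N})ˣ)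
                    * Ideal.Quotient.mk (Ideal.span {N}) (SyzAux.D p ((α i ⊔ α t) - α t)))))]
            rw [Finset.sum_congr rfl fun i (_ : i ∈ Finset.univ) =>
              if_pos (Finset.mem_univ t)]
            rw [← map_sum (MvPolynomial.monomial (γ - u t))]
        rw [hfirst, hsecond, ← map_add (MvPolynomial.monomial (γ - u t))]
        congr 1
        rw [heq t]
        ring
      rw [hkey2]
      refine Submodule.add_mem _
        (Submodule.sum_mem _ fun t _ => Submodule.smul_mem _ _
          (Submodule.subset_span (Or.inl ⟨t, rfl⟩)))
        (Submodule.sum_mem _ fun i _ => Submodule.sum_mem _ fun j _ => ?_)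
      rcases eq_or_ne (μ i j) 0 with h0 | h0
      · rw [h0, map_zero, zero_smul]
        exact Submodule.zero_mem _
      · obtain ⟨hiT, hjT, hij⟩ := hsupp i j h0
        have hkki : kk i = q := (Finset.mem_filter.1 hiT).2.1
        have hkkj : kk j = q := (Finset.mem_filter.1 hjT).2.1
        rcases hij.lt_or_gt with hlt | hlt
        · exact Submodule.smul_mem _ _ (Submodule.subset_span
            (Or.inr ⟨i, j, hlt, hkki.trans hkkj.symm, rfl⟩))
        · rw [hanti i j, smul_neg]
          exact Submodule.neg_mem _ (Submodule.smul_mem _ _ (Submodule.subset_span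
            (Or.inr ⟨j, i, hlt, hkkj.trans hkki.symm, rfl⟩)))
    rw [hWfun]
    exact Submodule.sum_mem _ fun γ _ => Submodule.sum_mem _ fun q _ => hmempiece γ q
  · intro hmem
    induction hmem using Submodule.span_induction with
    | mem x hx =>
      rcases hx with ⟨t0, rfl⟩ | ⟨i, j, hij, hkk, rfl⟩
      · rw [hsingle_sum, hf t0, hsmul_single, MvPolynomial.C_mul_monomial,
          hprodA t0, hcoeffann t0]
        simp
      · rw [hrr i j, hpair]
        rw [hf i, hf j, hsmul_single, hsmul_single,
          MvPolynomial.monomial_mul, MvPolynomial.monomial_mul]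
        rw [tsub_add_cancel_of_le (le_sup_left : u i ≤ u i ⊔ u j),
          tsub_add_cancel_of_le (le_sup_right : u j ≤ u i ⊔ u j)]
        rw [hprod i j]
        have hprodji : (∏ t, p t ^ (max (α i t) (α j t) - α j t))
            = SyzAux.D p ((α i ⊔ α j) - α j) := Finset.prod_congr rfl fun t _ => rfl
        rw [hprodji]
        rw [hcoeff i (α i ⊔ α j) le_sup_left, hcoeff j (α i ⊔ α j) le_sup_right, hkk]
        exact sub_self _
    | zero => simp
    | add x y hx hy ihx ihy =>
      have hsplit : ∑ t, (x + y) t • f t = (∑ t, x t • f t) + ∑ t, y t • f t := by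
        rw [← Finset.sum_add_distrib]
        exact Finset.sum_congr rfl fun t _ => by rw [Pi.add_apply, add_smul]
      rw [hsplit, ihx, ihy, add_zero]
    | smul a x hx ih =>
      rw [show (0 : Fin r → MvPolynomial (Fin n) (R ⧸ Ideal.span {N})) = a • (0 : Fin r → MvPolynomial (Fin n) (R ⧸ Ideal.span {N})) from (smul_zero a).symm, ← ih, Finset.smul_sum]
      exact Finset.sum_congr rfl fun t _ => by rw [Pi.smul_apply, smul_assoc]
end
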